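/- arXiv:2209.14376 — 6 statements merged into one kernel-verified Lean document; each statement's English description precedes it below -/
import Mathlib

section
/- Suppose the SED system assumption holds and A is (τ,e^{−ρ})-stable. Then for all integers k, m ≥ 1, the block M_{km} is (c_M, γ_M)-SED and J_k is (c_J, γ_M)-SED, where c_M = b²N²(τ²‖Q‖/(1−e^{−2ρ}) + 2q) + bN(s + τ‖S‖) + r, c_J = bN(τ²‖Q‖/(1−e^{−2ρ}) + 2q) + s + τ‖S‖, and γ_M = γρ/(ρ + ln(aN)). -/
open scoped Matrix.Norms.L2Operator
open Matrix

noncomputable section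

/-- Index type of a vector partitioned into `N` agent blocks of sizes `d`. -/
abbrev BIdx {N : ℕ} (d : Fin N → ℕ) : Type := (i : Fin N) × Fin (d i)

/-- The `(i,j)` agent block of a block-partitioned matrix. -/
def blk {N : ℕ} {d e : Fin N → ℕ} (X : Matrix (BIdx d) (BIdx e) ℝ) (i j : Fin N) :
    Matrix (Fin (d i)) (Fin (e j)) ℝ :=
  Matrix.of fun a b => X ⟨i, a⟩ ⟨j, b⟩

/-- `X` is `(c, γ)`-spatially exponentially decaying w.r.t. `dist`:
`‖[X]_{ij}‖ ≤ c e^{-γ dist(i,j)}` for all agents `i, j`. -/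
def IsSED {N : ℕ} {d e : Fin N → ℕ} (dist : Fin N → Fin N → ℝ) (c γ : ℝ)
    (X : Matrix (BIdx d) (BIdx e) ℝ) : Prop :=
  ∀ i j : Fin N, ‖blk X i j‖ ≤ c * Real.exp (-γ * dist i j)

/-- `dist` is nonnegative, symmetric, and satisfies the triangle inequality. -/
structure IsDist {N : ℕ} (dist : Fin N → Fin N → ℝ) : Prop where
  nonneg : ∀ i j, 0 ≤ dist i j
  symm : ∀ i j, dist i j = dist j i
  triangle : ∀ i j k, dist i j ≤ dist i k + dist k j

/-- `A` is `(τ, e^{-ρ})`-stable: `‖A^k‖ ≤ τ e^{-ρ k}` for every `k ≥ 0`. -/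
def IsExpStable {n : Type*} [Fintype n] [DecidableEq n] (τ ρ : ℝ)
    (A : Matrix n n ℝ) : Prop :=
  ∀ k : ℕ, ‖A ^ k‖ ≤ τ * Real.exp (-ρ * (k : ℝ))

/-- Smallest eigenvalue of a symmetric matrix, characterized via the Loewner order. -/
def eigMin {n : Type*} [Fintype n] [DecidableEq n] (A : Matrix n n ℝ) : ℝ :=
  sSup {t : ℝ | (A - t • (1 : Matrix n n ℝ)).PosSemidef}

/-- Largest eigenvalue of a symmetric matrix, characterized via the Loewner order. -/
def eigMax {n : Type*} [Fintype n] [DecidableEq n] (A : Matrix n n ℝ) : ℝ :=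
  sInf {t : ℝ | (t • (1 : Matrix n n ℝ) - A).PosSemidef}

/-- `G = ∑_{t=0}^∞ (A^t)ᵀ Q A^t`. -/
def Gmat {ιx : Type*} [Fintype ιx] [DecidableEq ιx] (A Q : Matrix ιx ιx ℝ) :
    Matrix ιx ιx ℝ :=
  ∑' t : ℕ, (A ^ t)ᵀ * Q * (A ^ t)

section LQRDefs

variable {ιx ιu : Type*} [Fintype ιx] [DecidableEq ιx] [Fintype ιu] [DecidableEq ιu]

/-- The `(k,m)` block of `M^{(H)}` (blocks indexed by `1 ≤ k, m ≤ H`). -/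
def Mblk (A : Matrix ιx ιx ℝ) (B : Matrix ιx ιu ℝ) (Q : Matrix ιx ιx ℝ)
    (R : Matrix ιu ιu ℝ) (S : Matrix ιu ιx ℝ) (k m : ℕ) : Matrix ιu ιu ℝ :=
  if k = m then Bᵀ * Gmat A Q * B + R
  else if m < k then Bᵀ * Gmat A Q * A ^ (k - m) * B + S * A ^ (k - m - 1) * B
  else Bᵀ * (A ^ (m - k))ᵀ * Gmat A Q * B + Bᵀ * (A ^ (m - k - 1))ᵀ * Sᵀ

/-- The `k`-th block of `J^{(H)}` (blocks indexed by `1 ≤ k ≤ H`). -/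
def Jblk (A : Matrix ιx ιx ℝ) (B : Matrix ιx ιu ℝ) (Q : Matrix ιx ιx ℝ)
    (S : Matrix ιu ιx ℝ) (k : ℕ) : Matrix ιu ιx ℝ :=
  Bᵀ * Gmat A Q * A ^ k + S * A ^ (k - 1)

/-- The `H × H` block matrix `M^{(H)}`. -/
def MH (H : ℕ) (A : Matrix ιx ιx ℝ) (B : Matrix ιx ιu ℝ) (Q : Matrix ιx ιx ℝ)
    (R : Matrix ιu ιu ℝ) (S : Matrix ιu ιx ℝ) :
    Matrix (Fin H × ιu) (Fin H × ιu) ℝ :=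
  Matrix.of fun p q => Mblk A B Q R S ((p.1 : ℕ) + 1) ((q.1 : ℕ) + 1) p.2 q.2

/-- The `H × 1` block matrix `J^{(H)}`. -/
def JH (H : ℕ) (A : Matrix ιx ιx ℝ) (B : Matrix ιx ιu ℝ) (Q : Matrix ιx ιx ℝ)
    (S : Matrix ιu ιx ℝ) : Matrix (Fin H × ιu) ιx ℝ :=
  Matrix.of fun p b => Jblk A B Q S ((p.1 : ℕ) + 1) p.2 b

/-- `L^{(H)} = -(M^{(H)})⁻¹ J^{(H)}`. -/
def LH (H : ℕ) (A : Matrix ιx ιx ℝ) (B : Matrix ιx ιu ℝ) (Q : Matrix ιx ιx ℝ)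
    (R : Matrix ιu ιu ℝ) (S : Matrix ιu ιx ℝ) : Matrix (Fin H × ιu) ιx ℝ :=
  -(MH H A B Q R S)⁻¹ * JH H A B Q S

/-- The `k`-th block `L_k^{(H)}` of `L^{(H)}` (0-based index `k : Fin H` is block `k+1`). -/
def LHblk (H : ℕ) (A : Matrix ιx ιx ℝ) (B : Matrix ιx ιu ℝ) (Q : Matrix ιx ιx ℝ)
    (R : Matrix ιu ιu ℝ) (S : Matrix ιu ιx ℝ) (k : Fin H) : Matrix ιu ιx ℝ :=
  Matrix.of fun a b => LH H A B Q R S (k, a) b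

/-- `P` solves the discrete algebraic Riccati equation. -/
def IsDARE (A : Matrix ιx ιx ℝ) (B : Matrix ιx ιu ℝ) (Q : Matrix ιx ιx ℝ)
    (R : Matrix ιu ιu ℝ) (S : Matrix ιu ιx ℝ) (P : Matrix ιx ιx ℝ) : Prop :=
  P = Aᵀ * P * A - (Aᵀ * P * B + Sᵀ) * (R + Bᵀ * P * B)⁻¹ * (Bᵀ * P * A + S) + Q

/-- The optimal LQR state-feedback gain `K = (R + BᵀPB)⁻¹(BᵀPA + S)`. -/
def optGain (A : Matrix ιx ιx ℝ) (B : Matrix ιx ιu ℝ)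
    (R : Matrix ιu ιu ℝ) (S : Matrix ιu ιx ℝ) (P : Matrix ιx ιx ℝ) : Matrix ιu ιx ℝ :=
  (R + Bᵀ * P * B)⁻¹ * (Bᵀ * P * A + S)

end LQRDefs


section ScalarAux


lemma scalar_min_le {ρ γ D L C1 C2 : ℝ} (hρ : 0 < ρ) (hγ : 0 < γ) (hD : 0 ≤ D)
    (hC1 : 0 ≤ C1) (hC2 : 0 ≤ C2) (hL : 0 < L) (u : ℝ) (hu : 0 ≤ u) :
    min (C1 * Real.exp (-ρ * u)) (C2 * Real.exp (L * u - γ * D))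
      ≤ (C1 + C2) * Real.exp (-(γ * ρ / (ρ + L)) * D) := by
  have hρL : 0 < ρ + L := by linarith
  set U : ℝ := γ * D / (ρ + L) with hU
  have hU0 : 0 ≤ U := by positivity
  have key1 : -ρ * U = -(γ * ρ / (ρ + L)) * D := by
    rw [hU]; field_simp [hρL.ne']
  have key2 : L * U - γ * D = -(γ * ρ / (ρ + L)) * D := by
    rw [hU]; field_simp [hρL.ne']; ring
  rcases le_total u U with h | h
  · calc min (C1 * Real.exp (-ρ * u)) (C2 * Real.exp (L * u - γ * D))
        ≤ C2 * Real.exp (L * u - γ * D) := min_le_right _ _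
      _ ≤ C2 * Real.exp (L * U - γ * D) :=
          mul_le_mul_of_nonneg_left (Real.exp_le_exp.mpr (by nlinarith)) hC2
      _ = C2 * Real.exp (-(γ * ρ / (ρ + L)) * D) := by rw [key2]
      _ ≤ (C1 + C2) * Real.exp (-(γ * ρ / (ρ + L)) * D) := by
          have := Real.exp_pos (-(γ * ρ / (ρ + L)) * D)
          nlinarith
  · calc min (C1 * Real.exp (-ρ * u)) (C2 * Real.exp (L * u - γ * D))
        ≤ C1 * Real.exp (-ρ * u) := min_le_left _ _
      _ ≤ C1 * Real.exp (-ρ * U) :=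
          mul_le_mul_of_nonneg_left (Real.exp_le_exp.mpr (by nlinarith)) hC1
      _ = C1 * Real.exp (-(γ * ρ / (ρ + L)) * D) := by rw [key1]
      _ ≤ (C1 + C2) * Real.exp (-(γ * ρ / (ρ + L)) * D) := by
          have := Real.exp_pos (-(γ * ρ / (ρ + L)) * D)
          nlinarith

lemma scalar_tsum_le {ρ γ D L C1 C2 : ℝ} (hρ : 0 < ρ) (hγ : 0 < γ) (hD : 0 ≤ D)
    (hC1 : 0 ≤ C1) (hC2 : 0 ≤ C2) (hL : Real.log 2 ≤ L) (n : ℕ) :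
    ∑' t : ℕ, min (C1 * Real.exp (-ρ * (2 * t + n))) (C2 * Real.exp (L * (2 * t + n) - γ * D))
      ≤ (C1 / (1 - Real.exp (-(2 * ρ))) + 2 * C2) * Real.exp (-(γ * ρ / (ρ + L)) * D) := by
  have hL0 : 0 < L := lt_of_lt_of_le (Real.log_pos one_lt_two) hL
  have hρL : 0 < ρ + L := by linarith
  have he2ρ : Real.exp (-(2 * ρ)) < 1 := Real.exp_lt_one_iff.mpr (by linarith)
  have h1e : 0 < 1 - Real.exp (-(2 * ρ)) := by linarith
  have hx4 : (4 : ℝ) ≤ Real.exp (2 * L) := by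
    have : Real.log 4 ≤ 2 * L := by
      rw [show (4:ℝ) = 2^2 by norm_num, Real.log_pow]
      push_cast; linarith
    calc (4:ℝ) = Real.exp (Real.log 4) := (Real.exp_log (by norm_num)).symm
      _ ≤ Real.exp (2 * L) := Real.exp_le_exp.mpr this
  set U : ℝ := γ * D / (ρ + L) with hU
  have hU0 : 0 ≤ U := by positivity
  have key1 : -(γ * ρ / (ρ + L)) * D = -ρ * U := by
    rw [hU]; field_simp [hρL.ne']
  have key2 : -(γ * ρ / (ρ + L)) * D = L * U - γ * D := by
    rw [hU]; field_simp; ring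
  set E : ℝ := Real.exp (-(γ * ρ / (ρ + L)) * D) with hE
  have hE0 : 0 < E := Real.exp_pos _
  set T : ℕ := ⌈(U - n) / 2⌉₊ with hT
  have hTge : (U - n) / 2 ≤ (T : ℝ) := Nat.le_ceil _
  set f : ℕ → ℝ := fun t =>
    min (C1 * Real.exp (-ρ * (2 * t + n))) (C2 * Real.exp (L * (2 * t + n) - γ * D)) with hf
  have hfnn : ∀ t, 0 ≤ f t := fun t => le_min (by positivity) (by positivity)
  have hgeq : ∀ t : ℕ, C1 * Real.exp (-ρ * (2 * t + n))
      = (C1 * Real.exp (-ρ * n)) * (Real.exp (-(2 * ρ)))^t := by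
    intro t
    rw [← Real.exp_nat_mul, mul_assoc, ← Real.exp_add]
    congr 2; ring
  have hfle : ∀ t, f t ≤ (C1 * Real.exp (-ρ * n)) * (Real.exp (-(2 * ρ)))^t := by
    intro t; rw [← hgeq]; exact min_le_left _ _
  have hgs : Summable (fun t : ℕ => (C1 * Real.exp (-ρ * n)) * (Real.exp (-(2 * ρ)))^t) :=
    (summable_geometric_of_lt_one (Real.exp_nonneg _) he2ρ).mul_left _
  have hfs : Summable f := Summable.of_nonneg_of_le hfnn hfle hgs
  rw [← hfs.sum_add_tsum_nat_add T]
  have partA : ∑ i ∈ Finset.range T, f i ≤ 2 * C2 * E := by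
    rcases Nat.eq_zero_or_pos T with h0 | hTpos
    · rw [h0]; simp; positivity
    · have hUn : 0 < (U - n) / 2 := by
        by_contra hcon
        push_neg at hcon
        have : T = 0 := Nat.ceil_eq_zero.mpr hcon
        omega
      have hTlt : (T : ℝ) < (U - n) / 2 + 1 := Nat.ceil_lt_add_one (le_of_lt hUn)
      have step1 : ∑ i ∈ Finset.range T, f i
          ≤ ∑ i ∈ Finset.range T, (C2 * Real.exp (L * n - γ * D)) * (Real.exp (2 * L))^i := by
        apply Finset.sum_le_sum
        intro i _
        have : C2 * Real.exp (L * (2 * i + n) - γ * D)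
            = (C2 * Real.exp (L * n - γ * D)) * (Real.exp (2 * L))^i := by
          rw [← Real.exp_nat_mul, mul_assoc, ← Real.exp_add]
          congr 2; ring
        rw [hf]
        refine le_trans (min_le_right _ _) (le_of_eq this)
      have hgeom : ∑ i ∈ Finset.range T, (Real.exp (2 * L))^i
          = ((Real.exp (2 * L))^T - 1) / (Real.exp (2 * L) - 1) :=
        geom_sum_eq (by nlinarith [hx4]) T
      have hden : (0:ℝ) < Real.exp (2 * L) - 1 := by linarith
      have step2 : ∑ i ∈ Finset.range T, (Real.exp (2 * L))^i
          ≤ (Real.exp (2 * L))^T / (Real.exp (2 * L) - 1) := by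
        rw [hgeom]
        exact (div_le_div_iff_of_pos_right hden).mpr (by linarith [pow_pos (Real.exp_pos (2*L)) T])
      have hexpT : (Real.exp (2 * L))^T = Real.exp (2 * L * T) := by
        rw [← Real.exp_nat_mul]; ring_nf
      have h2Tn : 2 * (T:ℝ) + n ≤ U + 2 := by linarith
      have step3 : (C2 * Real.exp (L * n - γ * D)) * ((Real.exp (2 * L))^T / (Real.exp (2 * L) - 1))
          ≤ 2 * C2 * E := by
        rw [hexpT]
        have hEq : Real.exp (L * n - γ * D) * Real.exp (2 * L * T)
            = Real.exp (L * (2 * T + n) - γ * D) := by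
          rw [← Real.exp_add]; congr 1; ring
        have hle1 : Real.exp (L * (2 * T + n) - γ * D) ≤ Real.exp (2 * L) * E := by
          rw [hE, key2, ← Real.exp_add]
          apply Real.exp_le_exp.mpr
          have := mul_le_mul_of_nonneg_left h2Tn hL0.le
          linarith
        have hfrac : Real.exp (2 * L) / (Real.exp (2 * L) - 1) ≤ 2 := by
          rw [div_le_iff₀ hden]; linarith
        calc (C2 * Real.exp (L * n - γ * D)) * (Real.exp (2 * L * T) / (Real.exp (2 * L) - 1))
            = C2 * (Real.exp (L * (2 * T + n) - γ * D) / (Real.exp (2 * L) - 1)) := by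
              rw [← hEq]; ring
          _ ≤ C2 * ((Real.exp (2 * L) * E) / (Real.exp (2 * L) - 1)) := by
              exact mul_le_mul_of_nonneg_left ((div_le_div_iff_of_pos_right hden).mpr hle1) hC2
          _ = C2 * (Real.exp (2 * L) / (Real.exp (2 * L) - 1)) * E := by ring
          _ ≤ C2 * 2 * E := by
              apply mul_le_mul_of_nonneg_right _ hE0.le
              exact mul_le_mul_of_nonneg_left hfrac hC2
          _ = 2 * C2 * E := by ring
      calc ∑ i ∈ Finset.range T, f i
          ≤ ∑ i ∈ Finset.range T, (C2 * Real.exp (L * n - γ * D)) * (Real.exp (2 * L))^i := step1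
        _ = (C2 * Real.exp (L * n - γ * D)) * ∑ i ∈ Finset.range T, (Real.exp (2 * L))^i := by
            rw [Finset.mul_sum]
        _ ≤ (C2 * Real.exp (L * n - γ * D)) * ((Real.exp (2 * L))^T / (Real.exp (2 * L) - 1)) := by
            apply mul_le_mul_of_nonneg_left step2 (by positivity)
        _ ≤ 2 * C2 * E := step3
  have partB : ∑' i : ℕ, f (i + T) ≤ C1 / (1 - Real.exp (-(2 * ρ))) * E := by
    have hUle : U ≤ 2 * (T:ℝ) + n := by linarith
    have htb : ∀ i : ℕ, f (i + T)
        ≤ (C1 * Real.exp (-ρ * (2 * T + n))) * (Real.exp (-(2 * ρ)))^i := by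
      intro i
      have h1 : f (i + T) ≤ C1 * Real.exp (-ρ * (2 * (i + T : ℕ) + n)) := min_le_left _ _
      refine h1.trans ?_
      rw [← Real.exp_nat_mul, mul_assoc, ← Real.exp_add]
      apply le_of_eq
      congr 2
      push_cast; ring
    have hgs2 : Summable (fun i : ℕ => (C1 * Real.exp (-ρ * (2 * T + n))) * (Real.exp (-(2 * ρ)))^i) :=
      (summable_geometric_of_lt_one (Real.exp_nonneg _) he2ρ).mul_left _
    calc ∑' i : ℕ, f (i + T)
        ≤ ∑' i : ℕ, (C1 * Real.exp (-ρ * (2 * T + n))) * (Real.exp (-(2 * ρ)))^i :=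
          Summable.tsum_le_tsum htb ((summable_nat_add_iff T).mpr hfs) hgs2
      _ = (C1 * Real.exp (-ρ * (2 * T + n))) * (1 - Real.exp (-(2 * ρ)))⁻¹ := by
          rw [tsum_mul_left, tsum_geometric_of_lt_one (Real.exp_nonneg _) he2ρ]
      _ ≤ C1 / (1 - Real.exp (-(2 * ρ))) * E := by
          rw [hE, key1]
          have hexple : Real.exp (-ρ * (2 * T + n)) ≤ Real.exp (-ρ * U) := by
            apply Real.exp_le_exp.mpr
            have := mul_le_mul_of_nonneg_left hUle hρ.le
            linarith
          rw [div_eq_mul_inv]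
          calc C1 * Real.exp (-ρ * (2 * T + n)) * (1 - Real.exp (-(2 * ρ)))⁻¹
              ≤ C1 * Real.exp (-ρ * U) * (1 - Real.exp (-(2 * ρ)))⁻¹ := by
                apply mul_le_mul_of_nonneg_right _ (by positivity)
                exact mul_le_mul_of_nonneg_left hexple hC1
            _ = C1 * (1 - Real.exp (-(2 * ρ)))⁻¹ * Real.exp (-ρ * U) := by ring
  calc ∑ i ∈ Finset.range T, f i + ∑' i : ℕ, f (i + T)
      ≤ 2 * C2 * E + C1 / (1 - Real.exp (-(2 * ρ))) * E := add_le_add partA partB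
    _ = (C1 / (1 - Real.exp (-(2 * ρ))) + 2 * C2) * E := by ring

end ScalarAux

section AuxBlk

variable {N : ℕ} {d e f : Fin N → ℕ}

lemma blk_add (X Y : Matrix (BIdx d) (BIdx e) ℝ) (i j : Fin N) :
    blk (X + Y) i j = blk X i j + blk Y i j := rfl

lemma blk_transpose (X : Matrix (BIdx d) (BIdx e) ℝ) (i j : Fin N) :
    blk Xᵀ i j = (blk X j i)ᵀ := rfl

lemma blk_mul (X : Matrix (BIdx d) (BIdx e) ℝ) (Y : Matrix (BIdx e) (BIdx f) ℝ)
    (i j : Fin N) :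
    blk (X * Y) i j = ∑ k, blk X i k * blk Y k j := by
  ext a b
  simp only [blk, Matrix.mul_apply, Matrix.of_apply, Matrix.sum_apply]
  rw [← Finset.univ_sigma_univ, Finset.sum_sigma]

/-- Selection matrix extracting the rows of block `i`. -/
def selM (d : Fin N → ℕ) (i : Fin N) : Matrix (Fin (d i)) (BIdx d) ℝ :=
  Matrix.of fun a p => if p = ⟨i, a⟩ then 1 else 0

lemma blk_eq_sel (X : Matrix (BIdx d) (BIdx e) ℝ) (i j : Fin N) :
    blk X i j = selM d i * X * (selM e j)ᵀ := by
  ext a b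
  simp [blk, selM, Matrix.mul_apply, Matrix.transpose_apply, ite_mul, mul_ite]

lemma selM_mul_transpose (d : Fin N → ℕ) (i : Fin N) :
    selM d i * (selM d i)ᵀ = 1 := by
  ext a b
  simp [selM, Matrix.mul_apply, Matrix.transpose_apply, Matrix.one_apply, Sigma.mk.inj_iff]
  exact if_congr eq_comm rfl rfl

lemma norm_transpose (X : Matrix (BIdx d) (BIdx e) ℝ) : ‖Xᵀ‖ = ‖X‖ := by
  rw [← Matrix.conjTranspose_eq_transpose_of_trivial, Matrix.l2_opNorm_conjTranspose]

lemma norm_selM_transpose (hd : 0 < d i) : ‖(selM d i)ᵀ‖ = 1 := by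
  haveI : Nonempty (Fin (d i)) := ⟨⟨0, hd⟩⟩
  have h := Matrix.l2_opNorm_conjTranspose_mul_self (selM d i)ᵀ
  rw [Matrix.conjTranspose_eq_transpose_of_trivial, Matrix.transpose_transpose,
    selM_mul_transpose] at h
  have h1 : ‖(1 : Matrix (Fin (d i)) (Fin (d i)) ℝ)‖ = 1 := CStarRing.norm_one
  nlinarith [norm_nonneg (selM d i)ᵀ]

lemma norm_transpose' {m n : Type*} [Fintype m] [Fintype n] [DecidableEq m] [DecidableEq n]
    (X : Matrix m n ℝ) : ‖Xᵀ‖ = ‖X‖ := by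
  rw [← Matrix.conjTranspose_eq_transpose_of_trivial, Matrix.l2_opNorm_conjTranspose]

lemma norm_blk_le (X : Matrix (BIdx d) (BIdx e) ℝ) (i j : Fin N)
    (hd : 0 < d i) (he : 0 < e j) : ‖blk X i j‖ ≤ ‖X‖ := by
  rw [blk_eq_sel]
  have h3 : ‖(selM e j)ᵀ‖ = 1 := norm_selM_transpose he
  have h4 : ‖selM d i‖ = 1 := by
    have := norm_transpose' (selM d i)ᵀ
    rw [Matrix.transpose_transpose] at this
    rw [this, norm_selM_transpose hd]
  calc ‖selM d i * X * (selM e j)ᵀ‖ ≤ ‖selM d i * X‖ * ‖(selM e j)ᵀ‖ :=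
        Matrix.l2_opNorm_mul _ _
    _ ≤ ‖selM d i‖ * ‖X‖ * ‖(selM e j)ᵀ‖ :=
        mul_le_mul_of_nonneg_right (Matrix.l2_opNorm_mul _ _) (norm_nonneg _)
    _ = ‖X‖ := by rw [h3, h4]; ring

section SED

variable {dist : Fin N → Fin N → ℝ} {γ : ℝ}

lemma IsSED.of_le {c c' : ℝ} {X : Matrix (BIdx d) (BIdx e) ℝ}
    (h : IsSED dist c γ X) (hcc : c ≤ c') : IsSED dist c' γ X := fun i j =>
  (h i j).trans (mul_le_mul_of_nonneg_right hcc (Real.exp_pos _).le)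

lemma IsSED.gamma_mono {c γ' : ℝ} {X : Matrix (BIdx d) (BIdx e) ℝ}
    (hdist : IsDist dist) (h : IsSED dist c γ X) (hc : 0 ≤ c) (hγ' : 0 ≤ γ') (hγ : γ' ≤ γ) :
    IsSED dist c γ' X := by
  intro i j
  refine (h i j).trans (mul_le_mul_of_nonneg_left (Real.exp_le_exp.mpr ?_) hc)
  have := hdist.nonneg i j
  nlinarith

lemma IsSED.add {c1 c2 : ℝ} {X Y : Matrix (BIdx d) (BIdx e) ℝ}
    (hX : IsSED dist c1 γ X) (hY : IsSED dist c2 γ Y) :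
    IsSED dist (c1 + c2) γ (X + Y) := by
  intro i j
  rw [blk_add]
  calc ‖blk X i j + blk Y i j‖ ≤ ‖blk X i j‖ + ‖blk Y i j‖ := norm_add_le _ _
    _ ≤ c1 * Real.exp (-γ * dist i j) + c2 * Real.exp (-γ * dist i j) :=
        add_le_add (hX i j) (hY i j)
    _ = (c1 + c2) * Real.exp (-γ * dist i j) := by ring

lemma IsSED.transpose {c : ℝ} {X : Matrix (BIdx d) (BIdx e) ℝ}
    (hdist : IsDist dist) (hX : IsSED dist c γ X) : IsSED dist c γ Xᵀ := by
  intro i j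
  rw [blk_transpose, norm_transpose', hdist.symm i j]
  exact hX j i

lemma IsSED.mul {c1 c2 : ℝ} {X : Matrix (BIdx d) (BIdx e) ℝ} {Y : Matrix (BIdx e) (BIdx f) ℝ}
    (hdist : IsDist dist) (hγ : 0 ≤ γ) (hc1 : 0 ≤ c1) (hc2 : 0 ≤ c2)
    (hX : IsSED dist c1 γ X) (hY : IsSED dist c2 γ Y) :
    IsSED dist (c1 * c2 * N) γ (X * Y) := by
  intro i j
  rw [blk_mul]
  calc ‖∑ k, blk X i k * blk Y k j‖ ≤ ∑ k, ‖blk X i k * blk Y k j‖ := norm_sum_le _ _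
    _ ≤ ∑ _k : Fin N, c1 * c2 * Real.exp (-γ * dist i j) := by
        apply Finset.sum_le_sum
        intro k _
        calc ‖blk X i k * blk Y k j‖ ≤ ‖blk X i k‖ * ‖blk Y k j‖ := Matrix.l2_opNorm_mul _ _
          _ ≤ (c1 * Real.exp (-γ * dist i k)) * (c2 * Real.exp (-γ * dist k j)) :=
              mul_le_mul (hX i k) (hY k j) (norm_nonneg _) (by positivity)
          _ = c1 * c2 * Real.exp (-γ * dist i k + -γ * dist k j) := by
              rw [Real.exp_add]; ring
          _ ≤ c1 * c2 * Real.exp (-γ * dist i j) := by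
              apply mul_le_mul_of_nonneg_left (Real.exp_le_exp.mpr ?_) (by positivity)
              have := hdist.triangle i j k
              nlinarith
    _ = c1 * c2 * N * Real.exp (-γ * dist i j) := by
        rw [Finset.sum_const, Finset.card_univ, Fintype.card_fin, nsmul_eq_mul]; ring

lemma sed_mul_pow {a c : ℝ} {A : Matrix (BIdx d) (BIdx d) ℝ} {X : Matrix (BIdx e) (BIdx d) ℝ}
    (hdist : IsDist dist) (hγ : 0 ≤ γ) (ha : 0 ≤ a) (hc : 0 ≤ c)
    (hA : IsSED dist a γ A) (hX : IsSED dist c γ X) :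
    ∀ t : ℕ, IsSED dist (c * (a * N) ^ t) γ (X * A ^ t) := by
  intro t
  induction t with
  | zero => simpa using hX
  | succ t ih =>
      have h := IsSED.mul hdist hγ (by positivity) ha ih hA
      have he : X * A ^ (t + 1) = X * A ^ t * A := by rw [pow_succ]; exact (Matrix.mul_assoc _ _ _).symm
      rw [he]
      exact h.of_le (by ring_nf; rfl)

end SED

end AuxBlk

section Tsum
variable {N : ℕ} {d e : Fin N → ℕ}

/-- `blk` as a linear map. -/
def blkLM (d e : Fin N → ℕ) (i j : Fin N) :
    Matrix (BIdx d) (BIdx e) ℝ →ₗ[ℝ] Matrix (Fin (d i)) (Fin (e j)) ℝ where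
  toFun X := blk X i j
  map_add' _ _ := rfl
  map_smul' _ _ := rfl

lemma blk_tsum (i j : Fin N) (F : ℕ → Matrix (BIdx d) (BIdx e) ℝ) (hF : Summable F) :
    blk (∑' t, F t) i j = ∑' t, blk (F t) i j :=
  (LinearMap.toContinuousLinearMap (blkLM d e i j)).map_tsum hF

lemma tsum_mul_matrix (F : ℕ → Matrix (BIdx d) (BIdx d) ℝ) (C : Matrix (BIdx d) (BIdx d) ℝ)
    (hF : Summable F) : (∑' t, F t) * C = ∑' t, F t * C :=
  (LinearMap.toContinuousLinearMap (LinearMap.mulRight ℝ C)).map_tsum hF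

lemma transpose_tsum (F : ℕ → Matrix (BIdx d) (BIdx d) ℝ) (hF : Summable F) :
    (∑' t, F t)ᵀ = ∑' t, (F t)ᵀ :=
  (LinearMap.toContinuousLinearMap
    ({ toFun := fun X => Xᵀ,
       map_add' := Matrix.transpose_add,
       map_smul' := Matrix.transpose_smul } :
      Matrix (BIdx d) (BIdx d) ℝ →ₗ[ℝ] Matrix (BIdx d) (BIdx d) ℝ)).map_tsum hF

end Tsum


/-- The constant `c_M`. -/
def cMconst (N : ℕ) (τ ρ b q r s nQ nS : ℝ) : ℝ :=
  b ^ 2 * (N : ℝ) ^ 2 * (τ ^ 2 * nQ / (1 - Real.exp (-(2 * ρ))) + 2 * q)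
    + b * (N : ℝ) * (s + τ * nS) + r

/-- The constant `c_J`. -/
def cJconst (N : ℕ) (τ ρ b q s nQ nS : ℝ) : ℝ :=
  b * (N : ℝ) * (τ ^ 2 * nQ / (1 - Real.exp (-(2 * ρ))) + 2 * q) + s + τ * nS

/-- The constant `c_K` of the open-loop-stable spatial-decay theorem. -/
def cKconst (N : ℕ) (τ ρ b q s nB nQ nS nK lmin : ℝ) : ℝ :=
  2 * τ ^ 3 * (nB ^ 2 * nK * nQ + nB * nK * nS)
      / ((1 - Real.exp (-(2 * ρ))) ^ ((5 : ℝ) / 2) * lmin)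
    + 2 * τ ^ 2 * (nB * nQ + nS) / ((1 - Real.exp (-(2 * ρ))) ^ 2 * lmin)
    + 2 * cJconst N τ ρ b q s nQ nS

/-- The constant `γ_K` of the open-loop-stable spatial-decay theorem. -/
def gammaKconst (N : ℕ) (γ τ ρ a b q r s nB nQ nS lmin lmaxR : ℝ) : ℝ :=
  (γ * ρ * lmin / (ρ + Real.log (a * (N : ℝ)))) *
    (1 / ((lmaxR + 4 * τ ^ 2 * (nB ^ 2 * nQ + nB * nS)
          / (1 - Real.exp (-(2 * ρ))) ^ 2) *
        Real.log (γ * cMconst N τ ρ b q r s nQ nS * (N : ℝ) ^ 2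
          + cMconst N τ ρ b q r s nQ nS * (N : ℝ) + 1) + lmin))

set_option maxHeartbeats 2000000 in
/-- Lemma: SED structure of the blocks `M_{km}` and `J_k`. -/
theorem Mblk_Jblk_SED
    {N : ℕ} (hN : 2 ≤ N) {nxd nud : Fin N → ℕ}
    (hnx : ∀ i, 1 ≤ nxd i) (hnu : ∀ i, 1 ≤ nud i)
    (dist : Fin N → Fin N → ℝ) (hdist : IsDist dist)
    (A : Matrix (BIdx nxd) (BIdx nxd) ℝ) (B : Matrix (BIdx nxd) (BIdx nud) ℝ)
    (Q : Matrix (BIdx nxd) (BIdx nxd) ℝ) (R : Matrix (BIdx nud) (BIdx nud) ℝ)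
    (S : Matrix (BIdx nud) (BIdx nxd) ℝ)
    (hQsym : Q.IsSymm) (hRsym : R.IsSymm)
    (γ a b q r s : ℝ) (hγ : 0 < γ)
    (ha : 1 ≤ a) (hb : 1 ≤ b) (hq : 1 ≤ q) (hr : 1 ≤ r) (hs : 0 < s)
    (hA : IsSED dist a γ A) (hB : IsSED dist b γ B) (hQ : IsSED dist q γ Q)
    (hR : IsSED dist r γ R) (hS : IsSED dist s γ S)
    (τ ρ : ℝ) (hτ : 1 ≤ τ) (hρ : 0 < ρ)
    (hAst : IsExpStable τ ρ A) :
    ∀ k m : ℕ, 1 ≤ k → 1 ≤ m →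
      IsSED dist (cMconst N τ ρ b q r s ‖Q‖ ‖S‖) (γ * ρ / (ρ + Real.log (a * (N : ℝ))))
        (Mblk A B Q R S k m) ∧
      IsSED dist (cJconst N τ ρ b q s ‖Q‖ ‖S‖) (γ * ρ / (ρ + Real.log (a * (N : ℝ))))
        (Jblk A B Q S k) := by
  
  classical
  have hN1 : (2:ℝ) ≤ (N:ℝ) := by exact_mod_cast hN
  have hNpos : (0:ℝ) < (N:ℝ) := by linarith
  set L : ℝ := Real.log (a * (N:ℝ)) with hLdef
  have haN2 : (2:ℝ) ≤ a * (N:ℝ) := by nlinarith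
  have haN0 : (0:ℝ) < a * (N:ℝ) := by linarith
  have hL : Real.log 2 ≤ L := Real.log_le_log (by norm_num) haN2
  have hL0 : 0 < L := lt_of_lt_of_le (Real.log_pos one_lt_two) hL
  have hρL : 0 < ρ + L := by linarith
  set γM : ℝ := γ * ρ / (ρ + L) with hγMdef
  have hγM0 : 0 < γM := by positivity
  have hγMle : γM ≤ γ := by
    rw [hγMdef, div_le_iff₀ hρL]; nlinarith
  have hb0 : (0:ℝ) ≤ b := by linarith
  have hq0 : (0:ℝ) ≤ q := by linarith
  have hr0 : (0:ℝ) ≤ r := by linarith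
  have ha0 : (0:ℝ) ≤ a := by linarith
  have hτ0 : (0:ℝ) ≤ τ := by linarith
  have hs0 : (0:ℝ) ≤ s := hs.le
  have hQn0 : (0:ℝ) ≤ ‖Q‖ := norm_nonneg _
  have hSn0 : (0:ℝ) ≤ ‖S‖ := norm_nonneg _
  have h1e : 0 < 1 - Real.exp (-(2 * ρ)) := by
    have : Real.exp (-(2*ρ)) < 1 := Real.exp_lt_one_iff.mpr (by linarith)
    linarith
  set cG : ℝ := τ^2 * ‖Q‖ / (1 - Real.exp (-(2*ρ))) + 2*q with hcGdef
  have hcG0 : 0 ≤ cG := by positivity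
  have hpowExp : ∀ m : ℕ, (a * (N:ℝ)) ^ m = Real.exp (L * m) := by
    intro m
    rw [hLdef]
    calc (a * (N:ℝ))^m = Real.exp (Real.log (a * (N:ℝ))) ^ m := by rw [Real.exp_log haN0]
      _ = Real.exp (m * Real.log (a * (N:ℝ))) := (Real.exp_nat_mul _ m).symm
      _ = Real.exp (Real.log (a * (N:ℝ)) * m) := by rw [mul_comm]
  -- spatial SED of the summands
  have hQt : IsSED dist q γ Qᵀ := hQ.transpose hdist
  have hQAt : ∀ t : ℕ, IsSED dist (q * (a*(N:ℝ))^t) γ (Qᵀ * A^t) :=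
    sed_mul_pow hdist hγ.le ha0 hq0 hA hQt
  have hAtQ : ∀ t : ℕ, IsSED dist (q * (a*(N:ℝ))^t) γ ((A^t)ᵀ * Q) := by
    intro t
    have h := (hQAt t).transpose hdist
    rwa [Matrix.transpose_mul, Matrix.transpose_transpose] at h
  have hYsed : ∀ t n : ℕ, IsSED dist (q * (a*(N:ℝ))^t * (a*(N:ℝ))^(t+n)) γ
      ((A^t)ᵀ * Q * A^(t+n)) :=
    fun t n => sed_mul_pow hdist hγ.le ha0 (by positivity) hA (hAtQ t) (t+n)
  -- temporal bound on the summands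
  have hYnorm : ∀ t n : ℕ, ‖(A^t)ᵀ * Q * A^(t+n)‖
      ≤ (τ^2 * ‖Q‖) * Real.exp (-ρ * (2*t+n)) := by
    intro t n
    have h2 : ‖(A^t)ᵀ * Q‖ ≤ ‖(A^t)ᵀ‖ * ‖Q‖ := Matrix.l2_opNorm_mul _ _
    have h3 : ‖(A^t)ᵀ‖ = ‖A^t‖ := norm_transpose' _
    have h4 := hAst t
    have h5 := hAst (t+n)
    push_cast at h5
    calc ‖(A^t)ᵀ * Q * A^(t+n)‖ ≤ ‖(A^t)ᵀ * Q‖ * ‖A^(t+n)‖ := Matrix.l2_opNorm_mul _ _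
      _ ≤ (τ * Real.exp (-ρ*(t:ℝ)) * ‖Q‖) * (τ * Real.exp (-ρ*((t:ℝ)+(n:ℝ)))) := by
          apply mul_le_mul ?_ h5 (norm_nonneg _) (by positivity)
          refine h2.trans ?_
          rw [h3]
          exact mul_le_mul_of_nonneg_right h4 hQn0
      _ = (τ^2 * ‖Q‖) * (Real.exp (-ρ*(t:ℝ)) * Real.exp (-ρ*((t:ℝ)+(n:ℝ)))) := by ring
      _ = (τ^2 * ‖Q‖) * Real.exp (-ρ * (2*t+n)) := by
          rw [← Real.exp_add]; congr 1; push_cast; ring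
  -- summability
  have hgeo : ∀ C : ℝ, Summable (fun t : ℕ => C * (Real.exp (-(2*ρ)))^t) := fun C =>
    (summable_geometric_of_lt_one (Real.exp_nonneg _)
      (Real.exp_lt_one_iff.mpr (by linarith))).mul_left C
  have hexpEq : ∀ n t : ℕ, (τ^2*‖Q‖) * Real.exp (-ρ*(2*t+n))
      = ((τ^2*‖Q‖) * Real.exp (-ρ*(n:ℝ))) * (Real.exp (-(2*ρ)))^t := by
    intro n t
    rw [← Real.exp_nat_mul, mul_assoc (τ^2*‖Q‖), ← Real.exp_add]
    congr 2
    push_cast; ring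
  have hYsummable : ∀ n : ℕ, Summable (fun t : ℕ => (A^t)ᵀ * Q * A^(t+n)) := by
    intro n
    apply Summable.of_norm_bounded (hgeo ((τ^2*‖Q‖) * Real.exp (-ρ*(n:ℝ))))
    intro t
    rw [← hexpEq]
    exact hYnorm t n
  have hGdef : Gmat A Q = ∑' t : ℕ, (A ^ t)ᵀ * Q * A ^ t := rfl
  have hYs0 : Summable (fun t : ℕ => (A^t)ᵀ * Q * A^t) := by
    have h := hYsummable 0
    simpa using h
  have hGmulA : ∀ n : ℕ, Gmat A Q * A ^ n = ∑' t : ℕ, (A^t)ᵀ * Q * A^(t+n) := by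
    intro n
    rw [hGdef, tsum_mul_matrix _ _ hYs0]
    congr 1
    funext t
    rw [Matrix.mul_assoc, ← pow_add]
  -- SED bound on G * A^n
  have hGA : ∀ n : ℕ, IsSED dist cG γM (Gmat A Q * A^n) := by
    intro n i j
    have hD := hdist.nonneg i j
    have hblkterm : ∀ t : ℕ, ‖blk ((A^t)ᵀ * Q * A^(t+n)) i j‖
        ≤ min ((τ^2*‖Q‖) * Real.exp (-ρ * (2*t+n)))
            (q * Real.exp (L * (2*t+n) - γ * dist i j)) := by
      intro t
      refine le_min ((norm_blk_le _ i j (hnx i) (hnx j)).trans (hYnorm t n)) ?_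
      refine (hYsed t n i j).trans (le_of_eq ?_)
      rw [hpowExp, hpowExp, mul_assoc q, ← Real.exp_add, mul_assoc q, ← Real.exp_add]
      congr 2
      push_cast; ring
    have hns : Summable (fun t : ℕ => ‖blk ((A^t)ᵀ * Q * A^(t+n)) i j‖) := by
      apply Summable.of_nonneg_of_le (fun t => norm_nonneg _) ?_
        (hgeo ((τ^2*‖Q‖) * Real.exp (-ρ*(n:ℝ))))
      intro t
      rw [← hexpEq]
      exact (norm_blk_le _ i j (hnx i) (hnx j)).trans (hYnorm t n)
    have hms : Summable (fun t : ℕ => min ((τ^2*‖Q‖) * Real.exp (-ρ * (2*t+n)))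
        (q * Real.exp (L * (2*t+n) - γ * dist i j))) := by
      apply Summable.of_nonneg_of_le (fun t => le_min (by positivity) (by positivity)) ?_
        (hgeo ((τ^2*‖Q‖) * Real.exp (-ρ*(n:ℝ))))
      intro t
      rw [← hexpEq]
      exact min_le_left _ _
    have hblkeq : blk (Gmat A Q * A^n) i j = ∑' t : ℕ, blk ((A^t)ᵀ * Q * A^(t+n)) i j := by
      rw [hGmulA n, blk_tsum i j _ (hYsummable n)]
    rw [hblkeq]
    calc ‖∑' t : ℕ, blk ((A^t)ᵀ * Q * A^(t+n)) i j‖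
        ≤ ∑' t : ℕ, ‖blk ((A^t)ᵀ * Q * A^(t+n)) i j‖ := norm_tsum_le_tsum_norm hns
      _ ≤ ∑' t : ℕ, min ((τ^2*‖Q‖) * Real.exp (-ρ * (2*t+n)))
            (q * Real.exp (L * (2*t+n) - γ * dist i j)) := Summable.tsum_le_tsum hblkterm hns hms
      _ ≤ ((τ^2*‖Q‖) / (1 - Real.exp (-(2 * ρ))) + 2 * q)
            * Real.exp (-(γ * ρ / (ρ + L)) * dist i j) :=
          scalar_tsum_le hρ hγ hD (by positivity) hq0 hL n
      _ = cG * Real.exp (-γM * dist i j) := by rw [hcGdef, hγMdef]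
  have hG0 : IsSED dist cG γM (Gmat A Q) := by
    have h := hGA 0
    rwa [pow_zero, mul_one] at h
  -- SED bound on S * A^n
  have hSAn : ∀ n : ℕ, IsSED dist (τ*‖S‖ + s) γM (S * A^n) := by
    intro n i j
    have hD := hdist.nonneg i j
    have hsp : ‖blk (S * A^n) i j‖ ≤ s * Real.exp (L * (n:ℝ) - γ * dist i j) := by
      refine (sed_mul_pow hdist hγ.le ha0 hs0 hA hS n i j).trans (le_of_eq ?_)
      rw [hpowExp, mul_assoc, ← Real.exp_add]
      congr 2
      ring
    have htmp : ‖blk (S * A^n) i j‖ ≤ (τ*‖S‖) * Real.exp (-ρ * (n:ℝ)) := by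
      refine (norm_blk_le _ i j (hnu i) (hnx j)).trans ?_
      calc ‖S * A^n‖ ≤ ‖S‖ * ‖A^n‖ := Matrix.l2_opNorm_mul _ _
        _ ≤ ‖S‖ * (τ * Real.exp (-ρ * (n:ℝ))) :=
            mul_le_mul_of_nonneg_left (hAst n) hSn0
        _ = (τ*‖S‖) * Real.exp (-ρ * (n:ℝ)) := by ring
    have h := (le_min htmp hsp).trans
      (scalar_min_le hρ hγ hD (by positivity) hs0 hL0 (n:ℝ) (by positivity))
    rw [← hγMdef] at h
    exact h
  -- assemble
  have hBγM : IsSED dist b γM B := hB.gamma_mono hdist hb0 hγM0.le hγMle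
  have hBt : IsSED dist b γM Bᵀ := (hB.transpose hdist).gamma_mono hdist hb0 hγM0.le hγMle
  have hRγM : IsSED dist r γM R := hR.gamma_mono hdist hr0 hγM0.le hγMle
  have hGsym : (Gmat A Q)ᵀ = Gmat A Q := by
    rw [hGdef, transpose_tsum _ hYs0]
    congr 1
    funext t
    rw [Matrix.transpose_mul, Matrix.transpose_mul, Matrix.transpose_transpose, hQsym,
      ← Matrix.mul_assoc]
  have hSτs0 : (0:ℝ) ≤ τ*‖S‖ + s := by positivity
  have hcM : cMconst N τ ρ b q r s ‖Q‖ ‖S‖ = b*cG*(N:ℝ)*b*(N:ℝ) + (τ*‖S‖+s)*b*(N:ℝ) + r := by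
    rw [hcGdef]; unfold cMconst; ring
  have hcJ : cJconst N τ ρ b q s ‖Q‖ ‖S‖ = b*cG*(N:ℝ) + (τ*‖S‖+s) := by
    rw [hcGdef]; unfold cJconst; ring
  have hBGB : ∀ n : ℕ, IsSED dist (b*cG*(N:ℝ)*b*(N:ℝ)) γM (Bᵀ * (Gmat A Q * A^n) * B) :=
    fun n => IsSED.mul hdist hγM0.le (by positivity) hb0
      (IsSED.mul hdist hγM0.le hb0 hcG0 hBt (hGA n)) hBγM
  have hSAB : ∀ n : ℕ, IsSED dist ((τ*‖S‖+s)*b*(N:ℝ)) γM (S * A^n * B) :=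
    fun n => IsSED.mul hdist hγM0.le hSτs0 hb0 (hSAn n) hBγM
  intro k m hk hm
  constructor
  · -- Mblk
    rcases lt_trichotomy k m with hkm | hkm | hkm
    · -- k < m
      have hMeq : Mblk A B Q R S k m
          = Bᵀ * (A ^ (m - k))ᵀ * Gmat A Q * B + Bᵀ * (A ^ (m - k - 1))ᵀ * Sᵀ := by
        unfold Mblk
        rw [if_neg (by omega), if_neg (by omega)]
      have heq1 : Bᵀ * (A ^ (m - k))ᵀ * Gmat A Q * B
          = Bᵀ * (Gmat A Q * A ^ (m - k))ᵀ * B := by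
        rw [Matrix.transpose_mul, hGsym, Matrix.mul_assoc Bᵀ]
      have heq2 : Bᵀ * (A ^ (m - k - 1))ᵀ * Sᵀ = (S * A ^ (m - k - 1) * B)ᵀ := by
        rw [Matrix.transpose_mul, Matrix.transpose_mul, ← Matrix.mul_assoc]
      have h1 : IsSED dist (b*cG*(N:ℝ)*b*(N:ℝ)) γM (Bᵀ * (Gmat A Q * A ^ (m-k))ᵀ * B) :=
        IsSED.mul hdist hγM0.le (by positivity) hb0
          (IsSED.mul hdist hγM0.le hb0 hcG0 hBt ((hGA (m-k)).transpose hdist)) hBγM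
      have h2 : IsSED dist ((τ*‖S‖+s)*b*(N:ℝ)) γM ((S * A ^ (m-k-1) * B)ᵀ) :=
        (hSAB (m-k-1)).transpose hdist
      rw [hMeq, heq1, heq2]
      exact (h1.add h2).of_le (by rw [hcM]; linarith)
    · -- k = m
      have hMeq : Mblk A B Q R S k m = Bᵀ * Gmat A Q * B + R := by
        unfold Mblk
        rw [if_pos hkm]
      have heq1 : Bᵀ * Gmat A Q * B = Bᵀ * (Gmat A Q * A ^ 0) * B := by
        rw [pow_zero, mul_one]
      rw [hMeq, heq1]
      refine ((hBGB 0).add hRγM).of_le ?_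
      rw [hcM]
      have : 0 ≤ (τ*‖S‖+s)*b*(N:ℝ) := by positivity
      linarith
    · -- m < k
      have hMeq : Mblk A B Q R S k m
          = Bᵀ * Gmat A Q * A ^ (k - m) * B + S * A ^ (k - m - 1) * B := by
        unfold Mblk
        rw [if_neg (by omega), if_pos hkm]
      have heq1 : Bᵀ * Gmat A Q * A ^ (k - m) * B = Bᵀ * (Gmat A Q * A ^ (k - m)) * B := by
        rw [Matrix.mul_assoc Bᵀ]
      rw [hMeq, heq1]
      exact ((hBGB (k-m)).add (hSAB (k-m-1))).of_le (by rw [hcM]; linarith)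
  · -- Jblk
    have hJeq : Jblk A B Q S k = Bᵀ * (Gmat A Q * A ^ k) + S * A ^ (k-1) := by
      unfold Jblk
      rw [Matrix.mul_assoc Bᵀ]
    have h1 : IsSED dist (b*cG*(N:ℝ)) γM (Bᵀ * (Gmat A Q * A ^ k)) :=
      IsSED.mul hdist hγM0.le hb0 hcG0 hBt (hGA k)
    rw [hJeq]
    exact (h1.add (hSAn (k-1))).of_le (le_of_eq (by rw [hcJ]))
end
end

section
/- Let N ≥ 1, c ≥ 1, A = c·I ∈ ℝ^{N×N}, and let B ∈ ℝ^{N×N} be the upper bidiagonal matrix with B_{ii} = 1 for all i, B_{i,i+1} = 1 for 1 ≤ i ≤ N−1, and all other entries 0. Then for every τ ≥ 1 and ρ > 0, every K₀ ∈ ℝ^{N×N} such that A − BK₀ is (τ,e^{−ρ})-stable satisfies ‖K₀‖ ≥ (1−e^{−ρ})·√N/τ; in particular there is no K₀ with ‖K₀‖ < (1−e^{−ρ})·√N/τ making A − BK₀ (τ,e^{−ρ})-stable. -/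
open scoped Matrix.Norms.L2Operator
open Matrix

noncomputable section

/-- Lemma: the counter-example admits no small-norm stabilizing gain. -/
theorem counterexample_no_small_stabilizer
    {N : ℕ} (hN : 1 ≤ N) (c : ℝ) (hc : 1 ≤ c)
    (B : Matrix (Fin N) (Fin N) ℝ)
    (hB : B = Matrix.of fun i j : Fin N => if i = j ∨ (i : ℕ) + 1 = (j : ℕ) then (1 : ℝ) else 0)
    (τ ρ : ℝ) (hτ : 1 ≤ τ) (hρ : 0 < ρ)
    (K₀ : Matrix (Fin N) (Fin N) ℝ)
    (hstab : IsExpStable τ ρ (c • (1 : Matrix (Fin N) (Fin N) ℝ) - B * K₀)) :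
    (1 - Real.exp (-ρ)) * Real.sqrt (N : ℝ) / τ ≤ ‖K₀‖ := by
  classical
  have hc0 : (0:ℝ) < c := lt_of_lt_of_le one_pos hc
  have hτ0 : (0:ℝ) < τ := lt_of_lt_of_le one_pos hτ
  have he1 : Real.exp (-ρ) < 1 := by
    rw [Real.exp_lt_one_iff]; linarith
  have hce : (0:ℝ) < c - Real.exp (-ρ) := by linarith
  set M : Matrix (Fin N) (Fin N) ℝ := c • (1 : Matrix (Fin N) (Fin N) ℝ) - B * K₀ with hMdef
  set r : ℝ := Real.exp (-ρ) / c with hrdef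
  have hr0 : (0:ℝ) ≤ r := by positivity
  have hr1 : r < 1 := by
    rw [hrdef, div_lt_one hc0]; linarith
  set X : Matrix (Fin N) (Fin N) ℝ := c⁻¹ • M with hXdef
  have hXk : ∀ k : ℕ, ‖X ^ k‖ ≤ τ * r ^ k := by
    intro k
    have h1 : ‖M ^ k‖ ≤ τ * Real.exp (-ρ) ^ k := by
      have h := hstab k
      rwa [show -ρ * (k:ℝ) = (k:ℝ) * (-ρ) by ring, Real.exp_nat_mul] at h
    calc ‖X ^ k‖ = (c⁻¹) ^ k * ‖M ^ k‖ := by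
          rw [hXdef, smul_pow, norm_smul, Real.norm_eq_abs, abs_pow,
            abs_of_pos (inv_pos.mpr hc0)]
      _ ≤ (c⁻¹) ^ k * (τ * Real.exp (-ρ) ^ k) :=
          mul_le_mul_of_nonneg_left h1 (by positivity)
      _ = τ * r ^ k := by
          rw [hrdef, div_pow, div_eq_mul_inv, inv_pow]; ring
  have hgeom : Summable (fun k : ℕ => τ * r ^ k) :=
    (summable_geometric_of_lt_one hr0 hr1).mul_left τ
  have hsum : Summable (fun k : ℕ => X ^ k) := Summable.of_norm_bounded hgeom hXk
  set T : Matrix (Fin N) (Fin N) ℝ := ∑' k : ℕ, X ^ k with hTdef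
  have hT : HasSum (fun k : ℕ => X ^ k) T := hsum.hasSum
  have hTnorm : ‖T‖ ≤ τ * (1 - r)⁻¹ :=
    tsum_of_norm_bounded ((hasSum_geometric_of_lt_one hr0 hr1).mul_left τ) hXk
  have hone : ((1 : Matrix (Fin N) (Fin N) ℝ) - X) * T = 1 := by
    have hfun : (fun k : ℕ => ((1 : Matrix (Fin N) (Fin N) ℝ) - X) * X ^ k)
        = fun k => X ^ k - X ^ (k+1) := by
      funext k; rw [sub_mul, one_mul, pow_succ']
    have h2 : HasSum (fun k : ℕ => X ^ k - X ^ (k+1))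
        (((1 : Matrix (Fin N) (Fin N) ℝ) - X) * T) := by
      rw [← hfun]; exact hT.mul_left _
    have h3 := h2.tendsto_sum_nat
    have h4 : (fun n : ℕ => ∑ k ∈ Finset.range n, (X ^ k - X ^ (k+1)))
        = fun n => 1 - X ^ n := by
      funext n; rw [Finset.sum_range_sub' (fun k => X ^ k), pow_zero]
    rw [h4] at h3
    have hX0 : Filter.Tendsto (fun n : ℕ => X ^ n) Filter.atTop (nhds 0) := by
      have hlim : Filter.Tendsto (fun n : ℕ => τ * r ^ n) Filter.atTop (nhds (τ * 0)) :=
        (tendsto_pow_atTop_nhds_zero_of_lt_one hr0 hr1).const_mul τ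
      rw [mul_zero] at hlim
      exact squeeze_zero_norm hXk hlim
    have h5 : Filter.Tendsto (fun n : ℕ => (1 : Matrix (Fin N) (Fin N) ℝ) - X ^ n)
        Filter.atTop (nhds (1 - 0)) := tendsto_const_nhds.sub hX0
    rw [sub_zero] at h5
    exact tendsto_nhds_unique h3 h5
  have hBK : B * K₀ = c • ((1 : Matrix (Fin N) (Fin N) ℝ) - X) := by
    rw [hXdef, smul_sub, smul_smul, mul_inv_cancel₀ (ne_of_gt hc0), one_smul, hMdef,
      sub_sub_cancel]
  set S : Matrix (Fin N) (Fin N) ℝ := K₀ * (c⁻¹ • T) with hSdef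
  have hBS : B * S = 1 := by
    rw [hSdef, ← Matrix.mul_assoc, hBK, smul_mul_assoc, mul_smul_comm, smul_smul,
      mul_inv_cancel₀ (ne_of_gt hc0), one_smul, hone]
  have hSB : S * B = 1 := mul_eq_one_comm.mp hBS
  have hN1 : N - 1 < N := by omega
  set u : EuclideanSpace ℝ (Fin N) := WithLp.toLp 2 (fun i => (-1 : ℝ) ^ (N - 1 - (i : ℕ))) with hudef
  set e : EuclideanSpace ℝ (Fin N) :=
    EuclideanSpace.single (⟨N - 1, hN1⟩ : Fin N) (1:ℝ) with hedef
  have hBu : B.mulVec (WithLp.ofLp u) = WithLp.ofLp e := by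
    funext i
    rw [hB]
    show (∑ j : Fin N, (if i = j ∨ (i:ℕ) + 1 = (j:ℕ) then (1:ℝ) else 0) * u j) = e i
    have hsplit : ∀ j : Fin N, (if i = j ∨ (i:ℕ)+1 = (j:ℕ) then (1:ℝ) else 0) * u j
        = (if i = j then u j else 0) + (if (i:ℕ)+1 = (j:ℕ) then u j else 0) := by
      intro j
      by_cases h1 : i = j
      · subst h1
        simp
      · by_cases h2 : (i:ℕ)+1 = (j:ℕ) <;> simp [h1, h2]
    rw [Finset.sum_congr rfl (fun j _ => hsplit j), Finset.sum_add_distrib,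
      Finset.sum_ite_eq Finset.univ i (fun j => u j), if_pos (Finset.mem_univ i)]
    by_cases h : (i:ℕ) + 1 < N
    · have hsum2 : (∑ j : Fin N, if (i:ℕ)+1 = (j:ℕ) then u j else 0)
          = u ⟨(i:ℕ)+1, h⟩ := by
        have hcongr : ∀ j : Fin N, (if (i:ℕ)+1 = (j:ℕ) then u j else 0)
            = (if (⟨(i:ℕ)+1, h⟩ : Fin N) = j then u j else 0) := by
          intro j
          refine if_congr ?_ rfl rfl
          rw [Fin.ext_iff]
        rw [Finset.sum_congr rfl (fun j _ => hcongr j),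
          Finset.sum_ite_eq Finset.univ _ (fun j => u j), if_pos (Finset.mem_univ _)]
      rw [hsum2]
      have hne : i ≠ (⟨N - 1, hN1⟩ : Fin N) := by
        rw [Ne, Fin.ext_iff]; simp only []; omega
      have hk : N - 1 - (i:ℕ) = (N - 1 - ((i:ℕ)+1)) + 1 := by omega
      have h0 : u i + u ⟨(i:ℕ)+1, h⟩ = 0 := by
        show (-1:ℝ) ^ (N - 1 - (i:ℕ)) + (-1:ℝ) ^ (N - 1 - ((i:ℕ)+1)) = 0
        rw [hk, pow_succ]; ring
      rw [h0, hedef]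
      rw [EuclideanSpace.single_apply, if_neg hne]
    · have h2 : ∀ j : Fin N, ¬((i:ℕ)+1 = (j:ℕ)) := fun j => by
        have := j.isLt; omega
      rw [Finset.sum_congr rfl (fun j _ => if_neg (h2 j)), Finset.sum_const_zero, add_zero]
      have hi : i = (⟨N - 1, hN1⟩ : Fin N) := by
        rw [Fin.ext_iff]; simp only []; have := i.isLt; omega
      have hz : N - 1 - (i:ℕ) = 0 := by have := i.isLt; omega
      show (-1:ℝ) ^ (N - 1 - (i:ℕ)) = e i
      rw [hz, pow_zero, hedef, EuclideanSpace.single_apply, if_pos hi]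
  have hSe : S.mulVec (WithLp.ofLp e) = WithLp.ofLp u := by
    rw [← hBu, Matrix.mulVec_mulVec, hSB, Matrix.one_mulVec]
  have hnu : ‖u‖ = Real.sqrt (N:ℝ) := by
    rw [EuclideanSpace.norm_eq]
    congr 1
    have hterm : ∀ i : Fin N, ‖u i‖ ^ 2 = 1 := by
      intro i
      have : u i = (-1 : ℝ) ^ (N - 1 - (i : ℕ)) := rfl
      rw [this, norm_pow, norm_neg, norm_one, one_pow, one_pow]
    rw [Finset.sum_congr rfl (fun i _ => hterm i), Finset.sum_const, Finset.card_univ,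
      Fintype.card_fin, nsmul_eq_mul, mul_one]
  have hnorme : ‖e‖ = 1 := by
    rw [hedef, EuclideanSpace.norm_single, norm_one]
  have hchain : Real.sqrt (N:ℝ) ≤ ‖S‖ := by
    have h1 := S.l2_opNorm_mulVec e
    rw [hSe] at h1
    have h2 : ‖(EuclideanSpace.equiv (Fin N) ℝ).symm u‖ = ‖u‖ := rfl
    rw [h2, hnorme, mul_one, hnu] at h1
    exact h1
  have hTc : ‖S‖ ≤ ‖K₀‖ * (τ / (c - Real.exp (-ρ))) := by
    have h1 : ‖S‖ ≤ ‖K₀‖ * ‖c⁻¹ • T‖ := norm_mul_le _ _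
    have h2 : ‖c⁻¹ • T‖ = c⁻¹ * ‖T‖ := by
      rw [norm_smul, Real.norm_eq_abs, abs_of_pos (inv_pos.mpr hc0)]
    have h3 : c⁻¹ * ‖T‖ ≤ c⁻¹ * (τ * (1 - r)⁻¹) :=
      mul_le_mul_of_nonneg_left hTnorm (by positivity)
    have h4 : c⁻¹ * (τ * (1 - r)⁻¹) = τ / (c - Real.exp (-ρ)) := by
      rw [hrdef]
      have h1r : 1 - Real.exp (-ρ) / c ≠ 0 := by
        have : 0 < 1 - Real.exp (-ρ) / c := by linarith [hr1, hr0]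
        linarith
      field_simp
    calc ‖S‖ ≤ ‖K₀‖ * ‖c⁻¹ • T‖ := h1
      _ = ‖K₀‖ * (c⁻¹ * ‖T‖) := by rw [h2]
      _ ≤ ‖K₀‖ * (c⁻¹ * (τ * (1 - r)⁻¹)) :=
          mul_le_mul_of_nonneg_left h3 (norm_nonneg _)
      _ = ‖K₀‖ * (τ / (c - Real.exp (-ρ))) := by rw [h4]
  have h5 : Real.sqrt (N:ℝ) ≤ ‖K₀‖ * τ / (c - Real.exp (-ρ)) := by
    rw [mul_div_assoc]; exact le_trans hchain hTc
  have h7 : Real.sqrt (N:ℝ) * (c - Real.exp (-ρ)) ≤ ‖K₀‖ * τ :=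
    (le_div_iff₀ hce).mp h5
  rw [div_le_iff₀ hτ0]
  calc (1 - Real.exp (-ρ)) * Real.sqrt (N:ℝ)
      ≤ Real.sqrt (N:ℝ) * (c - Real.exp (-ρ)) := by
        nlinarith [Real.sqrt_nonneg (N:ℝ)]
    _ ≤ ‖K₀‖ * τ := h7
end
end

section
/- Suppose the system matrices A ∈ ℝ^{n_x×n_x}, Q ∈ ℝ^{n_x×n_x}, S ∈ ℝ^{n_u×n_x} satisfy: A is (a,γ)-SED with a ≥ 1, Q is (q,γ)-SED with q > 0, S is (s,γ)-SED with s > 0, N ≥ 2, and A is (τ,e^{−ρ})-stable. Let G := Σ_{t=0}^∞ (A^t)ᵀQA^t. Then for every integer m ≥ 0: (i) G·A^m is (τ²‖Q‖/(1−e^{−2ρ}) + 2q, γρ/(ρ + ln(aN)))-SED, and (ii) S·A^m is (s + τ‖S‖, γρ/(ρ + ln(aN)))-SED. -/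
open scoped Matrix.Norms.L2Operator
open Matrix

noncomputable section

namespace GASAhelp

open Function

variable {m n l m' n' : Type*} [Fintype m] [Fintype n] [Fintype l] [Fintype m'] [Fintype n']
  [DecidableEq m] [DecidableEq n] [DecidableEq l] [DecidableEq m'] [DecidableEq n']

set_option linter.unusedSectionVars false

def sel (f : m' → m) : Matrix m' m ℝ := Matrix.of fun r c => if c = f r then 1 else 0

lemma sel_mul_transpose (f : m' → m) (hf : Injective f) : sel f * (sel f)ᵀ = 1 := by
  ext r s
  simp only [mul_apply, sel, transpose_apply, of_apply, one_apply]
  rw [Finset.sum_eq_single (f r)]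
  · simp [hf.eq_iff, eq_comm]
  · intro b _ hb; simp [if_neg hb]
  · simp

lemma norm_one_le_one : ‖(1 : Matrix m' m' ℝ)‖ ≤ 1 := by
  rcases isEmpty_or_nonempty m' with h | h
  · simp [Subsingleton.elim (1 : Matrix m' m' ℝ) 0]
  · exact le_of_eq CStarRing.norm_one

lemma norm_sel_le (f : m' → m) (hf : Injective f) : ‖sel f‖ ≤ 1 := by
  have h1 : ‖((sel f)ᴴ)ᴴ * (sel f)ᴴ‖ = ‖(sel f)ᴴ‖ * ‖(sel f)ᴴ‖ :=
    l2_opNorm_conjTranspose_mul_self _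
  rw [conjTranspose_conjTranspose, l2_opNorm_conjTranspose,
    conjTranspose_eq_transpose_of_trivial, sel_mul_transpose f hf] at h1
  nlinarith [norm_nonneg (sel f), norm_one_le_one (m' := m')]

lemma submatrix_eq_sel (X : Matrix m n ℝ) (f : m' → m) (g : n' → n) :
    X.submatrix f g = sel f * X * (sel g)ᵀ := by
  ext r s
  simp [mul_apply, sel, Finset.sum_ite_eq', Finset.mul_sum]

lemma norm_submatrix_le (X : Matrix m n ℝ) (f : m' → m) (g : n' → n)
    (hf : Injective f) (hg : Injective g) : ‖X.submatrix f g‖ ≤ ‖X‖ := by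
  rw [submatrix_eq_sel]
  calc ‖sel f * X * (sel g)ᵀ‖ ≤ ‖sel f * X‖ * ‖(sel g)ᵀ‖ := l2_opNorm_mul _ _
    _ ≤ ‖sel f‖ * ‖X‖ * ‖(sel g)ᵀ‖ := by
        have := l2_opNorm_mul (sel f) X
        gcongr
    _ ≤ ‖X‖ := by
        rw [← conjTranspose_eq_transpose_of_trivial, l2_opNorm_conjTranspose]
        have h1 := norm_sel_le f hf
        have h2 := norm_sel_le g hg
        have h3 : ‖sel f‖ * ‖X‖ ≤ ‖X‖ := mul_le_of_le_one_left (norm_nonneg _) h1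
        exact le_trans (mul_le_of_le_one_right (mul_nonneg (norm_nonneg _) (norm_nonneg _)) h2) h3

variable {N : ℕ} {d e g : Fin N → ℕ}

lemma norm_blk_le (X : Matrix (BIdx d) (BIdx e) ℝ) (i j : Fin N) : ‖blk X i j‖ ≤ ‖X‖ :=
  norm_submatrix_le X (Sigma.mk i) (Sigma.mk j) sigma_mk_injective sigma_mk_injective

lemma blk_mul (X : Matrix (BIdx d) (BIdx e) ℝ) (Y : Matrix (BIdx e) (BIdx g) ℝ) (i j : Fin N) :
    blk (X * Y) i j = ∑ k, blk X i k * blk Y k j := by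
  ext a b
  simp only [blk, Matrix.mul_apply, Matrix.sum_apply, Matrix.of_apply]
  rw [← Finset.univ_sigma_univ, Finset.sum_sigma]

lemma norm_blk_mul_le (X : Matrix (BIdx d) (BIdx e) ℝ) (Y : Matrix (BIdx e) (BIdx g) ℝ)
    (i j : Fin N) : ‖blk (X * Y) i j‖ ≤ ∑ k, ‖blk X i k‖ * ‖blk Y k j‖ := by
  rw [blk_mul]
  exact (norm_sum_le _ _).trans (Finset.sum_le_sum fun k _ => l2_opNorm_mul _ _)

lemma norm_blk_transpose (X : Matrix (BIdx d) (BIdx e) ℝ) (i j : Fin N) :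
    ‖blk Xᵀ i j‖ = ‖blk X j i‖ := by
  have h : blk Xᵀ i j = (blk X j i)ᵀ := rfl
  rw [h, ← conjTranspose_eq_transpose_of_trivial, l2_opNorm_conjTranspose]

lemma sed_matmul {dist : Fin N → Fin N → ℝ} (hdist : IsDist dist) {c1 c2 γ : ℝ}
    (hγ : 0 ≤ γ) (hc1 : 0 ≤ c1) (hc2 : 0 ≤ c2)
    {X : Matrix (BIdx d) (BIdx e) ℝ} {Y : Matrix (BIdx e) (BIdx g) ℝ}
    (hX : IsSED dist c1 γ X) (hY : IsSED dist c2 γ Y) :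
    IsSED dist (c1 * c2 * N) γ (X * Y) := by
  intro i j
  calc ‖blk (X * Y) i j‖ ≤ ∑ k, ‖blk X i k‖ * ‖blk Y k j‖ := norm_blk_mul_le X Y i j
    _ ≤ ∑ _k : Fin N, c1 * c2 * Real.exp (-γ * dist i j) := by
        refine Finset.sum_le_sum fun k _ => ?_
        have h1 := hX i k
        have h2 := hY k j
        have h3 : Real.exp (-γ * dist i k) * Real.exp (-γ * dist k j)
            ≤ Real.exp (-γ * dist i j) := by
          rw [← Real.exp_add]
          apply Real.exp_le_exp.2
          nlinarith [hdist.triangle i j k, hdist.nonneg i k, hdist.nonneg k j]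
        calc ‖blk X i k‖ * ‖blk Y k j‖
            ≤ (c1 * Real.exp (-γ * dist i k)) * (c2 * Real.exp (-γ * dist k j)) :=
              mul_le_mul h1 h2 (norm_nonneg _) (by positivity)
          _ = c1 * c2 * (Real.exp (-γ * dist i k) * Real.exp (-γ * dist k j)) := by ring
          _ ≤ c1 * c2 * Real.exp (-γ * dist i j) := by
              apply mul_le_mul_of_nonneg_left h3 (by positivity)
    _ = c1 * c2 * N * Real.exp (-γ * dist i j) := by
        rw [Finset.sum_const, Finset.card_univ, Fintype.card_fin, nsmul_eq_mul]; ring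

lemma sed_mul_pow {dist : Fin N → Fin N → ℝ} (hdist : IsDist dist) {c a γ : ℝ}
    (hγ : 0 ≤ γ) (hc : 0 ≤ c) (ha : 0 ≤ a)
    {X : Matrix (BIdx d) (BIdx e) ℝ} {A : Matrix (BIdx e) (BIdx e) ℝ}
    (hX : IsSED dist c γ X) (hA : IsSED dist a γ A) (m : ℕ) :
    IsSED dist (c * (a * N) ^ m) γ (X * A ^ m) := by
  induction m with
  | zero => simpa using hX
  | succ t ih =>
      have h : X * A ^ (t + 1) = (X * A ^ t) * A := by
        rw [pow_succ]; exact (Matrix.mul_assoc X (A ^ t) A).symm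
      have hconst : c * (a * (N : ℝ)) ^ (t + 1) = (c * (a * N) ^ t) * a * (N : ℝ) := by ring
      rw [h, hconst]
      exact sed_matmul hdist hγ (by positivity) ha ih hA

lemma sed_pow_mul {dist : Fin N → Fin N → ℝ} (hdist : IsDist dist) {c a γ : ℝ}
    (hγ : 0 ≤ γ) (hc : 0 ≤ c) (ha : 0 ≤ a)
    {X : Matrix (BIdx e) (BIdx g) ℝ} {A : Matrix (BIdx e) (BIdx e) ℝ}
    (hX : IsSED dist c γ X) (hA : IsSED dist a γ A) (t : ℕ) :
    IsSED dist ((a * N) ^ t * c) γ ((Aᵀ) ^ t * X) := by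
  have hAT : IsSED dist a γ Aᵀ := by
    intro i j
    rw [norm_blk_transpose, hdist.symm i j]
    exact hA j i
  induction t with
  | zero => simpa using hX
  | succ t ih =>
      have h : Aᵀ ^ (t + 1) * X = Aᵀ * (Aᵀ ^ t * X) := by
        rw [pow_succ']; exact Matrix.mul_assoc Aᵀ (Aᵀ ^ t) X
      have hconst : (a * (N : ℝ)) ^ (t + 1) * c = a * ((a * N) ^ t * c) * (N : ℝ) := by ring
      rw [h, hconst]
      exact sed_matmul hdist hγ ha (by positivity) hAT ih

end GASAhelp
set_option maxHeartbeats 1000000 in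
/-- Lemma: SED structure of `G A^m` and `S A^m`. -/
theorem GA_SA_SED
    {N : ℕ} (hN : 2 ≤ N) {nxd nud : Fin N → ℕ}
    (hnx : ∀ i, 1 ≤ nxd i) (hnu : ∀ i, 1 ≤ nud i)
    (dist : Fin N → Fin N → ℝ) (hdist : IsDist dist)
    (A : Matrix (BIdx nxd) (BIdx nxd) ℝ)
    (Q : Matrix (BIdx nxd) (BIdx nxd) ℝ)
    (S : Matrix (BIdx nud) (BIdx nxd) ℝ)
    (γ a q s : ℝ) (hγ : 0 < γ) (ha : 1 ≤ a) (hq : 0 < q) (hs : 0 < s)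
    (hA : IsSED dist a γ A) (hQ : IsSED dist q γ Q) (hS : IsSED dist s γ S)
    (τ ρ : ℝ) (hτ : 1 ≤ τ) (hρ : 0 < ρ)
    (hAst : IsExpStable τ ρ A) :
    ∀ m : ℕ,
      IsSED dist (τ ^ 2 * ‖Q‖ / (1 - Real.exp (-(2 * ρ))) + 2 * q)
        (γ * ρ / (ρ + Real.log (a * (N : ℝ)))) (Gmat A Q * A ^ m) ∧
      IsSED dist (s + τ * ‖S‖)
        (γ * ρ / (ρ + Real.log (a * (N : ℝ)))) (S * A ^ m) := by
  classical
  intro m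
  have hN2 : (2:ℝ) ≤ (N:ℝ) := by exact_mod_cast hN
  have ha0 : (0:ℝ) ≤ a := le_trans zero_le_one ha
  have haN : (2:ℝ) ≤ a * N := by nlinarith
  have haN0 : (0:ℝ) < a * (N:ℝ) := by linarith
  set L := Real.log (a * (N : ℝ)) with hLdef
  have hL : 0 < L := Real.log_pos (by linarith)
  have hρL : 0 < ρ + L := by linarith
  set γ' := γ * ρ / (ρ + L) with hγ'def
  have hγ'0 : 0 ≤ γ' := by positivity
  have hQn : (0:ℝ) ≤ ‖Q‖ := norm_nonneg _
  have hSn : (0:ℝ) ≤ ‖S‖ := norm_nonneg _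
  have hpow : ∀ k : ℕ, (a * (N:ℝ)) ^ k = Real.exp ((k:ℝ) * L) := by
    intro k
    rw [hLdef, ← Real.exp_log haN0, ← Real.exp_nat_mul, Real.exp_log haN0]
  set E := Real.exp (-(2 * ρ)) with hE
  have hE0 : 0 < E := Real.exp_pos _
  have hE1 : E < 1 := Real.exp_lt_one_iff.2 (by linarith)
  have h1E : 0 < 1 - E := by linarith
  set C := τ ^ 2 * ‖Q‖ with hC
  have hC0 : 0 ≤ C := by positivity
  constructor
  · -- Part 1 : Gmat A Q * A ^ m
    intro i j
    set dij := dist i j with hdij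
    have hd0 : 0 ≤ dij := hdist.nonneg i j
    set x := γ * dij / (ρ + L) with hx
    have hx0 : 0 ≤ x := by positivity
    have key1 : ρ * x = γ' * dij := by
      rw [hx, hγ'def]; field_simp
    have key2 : x * L - γ * dij = -(γ' * dij) := by
      rw [hx, hγ'def]; field_simp; ring
    set f : ℕ → Matrix (BIdx nxd) (BIdx nxd) ℝ := fun t => (A ^ t)ᵀ * Q * A ^ t with hf
    have hnormAT : ∀ t : ℕ, ‖(A ^ t)ᵀ‖ = ‖A ^ t‖ := by
      intro t
      rw [← Matrix.conjTranspose_eq_transpose_of_trivial, Matrix.l2_opNorm_conjTranspose]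
    have hfb : ∀ t, ‖f t‖ ≤ C * E ^ t := by
      intro t
      have h1 : ‖f t‖ ≤ ‖(A ^ t)ᵀ‖ * ‖Q‖ * ‖A ^ t‖ := by
        calc ‖(A ^ t)ᵀ * Q * A ^ t‖ ≤ ‖(A ^ t)ᵀ * Q‖ * ‖A ^ t‖ := Matrix.l2_opNorm_mul _ _
          _ ≤ ‖(A ^ t)ᵀ‖ * ‖Q‖ * ‖A ^ t‖ := by
              have := Matrix.l2_opNorm_mul (A ^ t)ᵀ Q
              gcongr
      have h2 : ‖A ^ t‖ ≤ τ * Real.exp (-ρ * t) := hAst t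
      have hEt : E ^ t = Real.exp (-ρ * t) * Real.exp (-ρ * t) := by
        rw [hE, ← Real.exp_nat_mul, ← Real.exp_add]; ring_nf
      rw [hnormAT t] at h1
      calc ‖f t‖ ≤ ‖A ^ t‖ * ‖Q‖ * ‖A ^ t‖ := h1
        _ = ‖A ^ t‖ * ‖A ^ t‖ * ‖Q‖ := by ring
        _ ≤ ((τ * Real.exp (-ρ * t)) * (τ * Real.exp (-ρ * t))) * ‖Q‖ := by
            have h3 : (0:ℝ) ≤ ‖A ^ t‖ := norm_nonneg _
            have h4 : (0:ℝ) ≤ τ * Real.exp (-ρ * t) := le_trans h3 h2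
            exact mul_le_mul_of_nonneg_right (mul_le_mul h2 h2 h3 h4) hQn
        _ = (τ * Real.exp (-ρ * t)) * ‖Q‖ * (τ * Real.exp (-ρ * t)) := by ring
        _ = C * E ^ t := by rw [hC, hEt]; ring
    have hsumf : Summable f :=
      Summable.of_norm_bounded ((summable_geometric_of_lt_one hE0.le hE1).mul_left C) hfb
    have hG : HasSum f (Gmat A Q) := hsumf.hasSum
    have hGA : HasSum (fun t => f t * A ^ m) (Gmat A Q * A ^ m) := hG.mul_right _
    let blkL : Matrix (BIdx nxd) (BIdx nxd) ℝ →ₗ[ℝ] Matrix (Fin (nxd i)) (Fin (nxd j)) ℝ :=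
      { toFun := fun X => blk X i j
        map_add' := fun X Y => rfl
        map_smul' := fun c X => rfl }
    let blkC := blkL.mkContinuous 1 (fun X => by
        rw [one_mul]; exact GASAhelp.norm_blk_le X i j)
    have hφ : ∀ X : Matrix (BIdx nxd) (BIdx nxd) ℝ, blkC X = blk X i j := fun X => rfl
    have hblk0 := blkC.hasSum hGA
    simp only [hφ] at hblk0
    have hblk : HasSum (fun t => blk (f t * A ^ m) i j) (blk (Gmat A Q * A ^ m) i j) := hblk0
    set u : ℕ → ℝ := fun t => ‖blk (f t * A ^ m) i j‖ with hu
    have hu0 : ∀ t, 0 ≤ u t := fun t => norm_nonneg _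
    -- norm-type bound
    have hfm : ∀ t, f t * A ^ m = (A ^ t)ᵀ * Q * A ^ (t + m) := by
      intro t
      rw [hf]
      dsimp only
      rw [Matrix.mul_assoc, ← pow_add]
    have ub2 : ∀ t : ℕ, u t ≤ C * Real.exp (-ρ * (2 * (t:ℝ) + m)) := by
      intro t
      refine (GASAhelp.norm_blk_le _ i j).trans ?_
      rw [hfm t]
      have h1 : ‖(A ^ t)ᵀ * Q * A ^ (t + m)‖ ≤ ‖(A ^ t)ᵀ‖ * ‖Q‖ * ‖A ^ (t + m)‖ := by
        calc ‖(A ^ t)ᵀ * Q * A ^ (t + m)‖ ≤ ‖(A ^ t)ᵀ * Q‖ * ‖A ^ (t + m)‖ :=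
              Matrix.l2_opNorm_mul _ _
          _ ≤ ‖(A ^ t)ᵀ‖ * ‖Q‖ * ‖A ^ (t + m)‖ := by
              have := Matrix.l2_opNorm_mul (A ^ t)ᵀ Q
              gcongr
      rw [hnormAT t] at h1
      have h2 := hAst t
      have h3 := hAst (t + m)
      have hexp : Real.exp (-ρ * t) * Real.exp (-ρ * ((t + m : ℕ) : ℝ))
          = Real.exp (-ρ * (2 * (t:ℝ) + m)) := by
        rw [← Real.exp_add]; push_cast; ring_nf
      calc ‖(A ^ t)ᵀ * Q * A ^ (t + m)‖ ≤ ‖A ^ t‖ * ‖Q‖ * ‖A ^ (t + m)‖ := h1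
        _ = ‖A ^ t‖ * ‖A ^ (t + m)‖ * ‖Q‖ := by ring
        _ ≤ ((τ * Real.exp (-ρ * t)) * (τ * Real.exp (-ρ * ((t + m : ℕ) : ℝ)))) * ‖Q‖ := by
            have h4 : (0:ℝ) ≤ ‖A ^ t‖ := norm_nonneg _
            have h5 : (0:ℝ) ≤ ‖A ^ (t + m)‖ := norm_nonneg _
            have h6 : (0:ℝ) ≤ τ * Real.exp (-ρ * t) := le_trans h4 h2
            exact mul_le_mul_of_nonneg_right (mul_le_mul h2 h3 h5 h6) hQn
        _ = (τ * Real.exp (-ρ * t)) * ‖Q‖ * (τ * Real.exp (-ρ * ((t + m : ℕ) : ℝ))) := by ring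
        _ = C * Real.exp (-ρ * (2 * (t:ℝ) + m)) := by rw [hC, ← hexp]; ring
    -- SED-type bound
    have ub1 : ∀ t : ℕ, u t ≤ q * (a * N) ^ (2 * t + m) * Real.exp (-γ * dij) := by
      intro t
      have h1 : IsSED dist (q * (a * N) ^ (t + m)) γ (Q * A ^ (t + m)) :=
        GASAhelp.sed_mul_pow hdist hγ.le hq.le ha0 hQ hA (t + m)
      have h2 : IsSED dist ((a * N) ^ t * (q * (a * N) ^ (t + m))) γ ((Aᵀ) ^ t * (Q * A ^ (t + m))) :=
        GASAhelp.sed_pow_mul hdist hγ.le (by positivity) ha0 h1 hA t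
      have h3 : f t * A ^ m = (Aᵀ) ^ t * (Q * A ^ (t + m)) := by
        rw [hfm t, Matrix.transpose_pow, Matrix.mul_assoc]
      have h4 := h2 i j
      rw [← h3] at h4
      refine h4.trans (le_of_eq ?_)
      have h5 : 2 * t + m = t + (t + m) := by ring
      rw [h5, pow_add]; ring
    have huS : Summable u := by
      refine Summable.of_nonneg_of_le hu0 (fun t => ?_)
        (((summable_geometric_of_lt_one hE0.le hE1).mul_left (C * Real.exp (-ρ * (m:ℝ))))) 
      refine (ub2 t).trans (le_of_eq ?_)
      have hxp : -ρ * (2 * (t:ℝ) + m) = -ρ * (m:ℝ) + (t:ℝ) * (-(2 * ρ)) := by ring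
      rw [hE, ← Real.exp_nat_mul, hxp, Real.exp_add]
      ring
    have hmain : ‖blk (Gmat A Q * A ^ m) i j‖ ≤ ∑' t, u t := by
      rw [← hblk.tsum_eq]
      exact norm_tsum_le_tsum_norm huS
    -- split the sum
    obtain ⟨T, hT⟩ : ∃ T : ℕ, T = ⌈(x - (m:ℝ)) / 2⌉₊ := ⟨_, rfl⟩
    have hT1 : x ≤ 2 * (T:ℝ) + m := by
      have := Nat.le_ceil ((x - (m:ℝ)) / 2)
      rw [← hT] at this
      linarith
    have hsplit : (∑ t ∈ Finset.range T, u t) + ∑' t, u (t + T) = ∑' t, u t :=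
      huS.sum_add_tsum_nat_add T
    -- tail bound
    have htail : ∑' t : ℕ, u (t + T) ≤ C * (1 - E)⁻¹ * Real.exp (-(γ' * dij)) := by
      have hb : ∀ t : ℕ, u (t + T) ≤ (C * Real.exp (-ρ * (2 * (T:ℝ) + m))) * E ^ t := by
        intro t
        refine (ub2 (t + T)).trans (le_of_eq ?_)
        have hxp : -ρ * (2 * ((t + T : ℕ):ℝ) + m)
            = -ρ * (2 * (T:ℝ) + m) + (t:ℝ) * (-(2 * ρ)) := by push_cast; ring
        rw [hE, ← Real.exp_nat_mul, hxp, Real.exp_add]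
        ring
      have hbs : Summable (fun t : ℕ => u (t + T)) := (summable_nat_add_iff T).2 huS
      calc ∑' t : ℕ, u (t + T)
          ≤ ∑' t : ℕ, (C * Real.exp (-ρ * (2 * (T:ℝ) + m))) * E ^ t :=
            Summable.tsum_le_tsum hb hbs
              ((summable_geometric_of_lt_one hE0.le hE1).mul_left _)
        _ = (C * Real.exp (-ρ * (2 * (T:ℝ) + m))) * (1 - E)⁻¹ := by
            rw [tsum_mul_left, tsum_geometric_of_lt_one hE0.le hE1]
        _ ≤ C * (1 - E)⁻¹ * Real.exp (-(γ' * dij)) := by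
            have hee : Real.exp (-ρ * (2 * (T:ℝ) + m)) ≤ Real.exp (-(γ' * dij)) := by
              apply Real.exp_le_exp.2
              have h7 : ρ * x ≤ ρ * (2 * (T:ℝ) + m) :=
                mul_le_mul_of_nonneg_left hT1 hρ.le
              rw [← key1]
              linarith
            have : (0:ℝ) ≤ C * (1 - E)⁻¹ := by positivity
            calc (C * Real.exp (-ρ * (2 * (T:ℝ) + m))) * (1 - E)⁻¹
                = C * (1 - E)⁻¹ * Real.exp (-ρ * (2 * (T:ℝ) + m)) := by ring
              _ ≤ C * (1 - E)⁻¹ * Real.exp (-(γ' * dij)) := by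
                  exact mul_le_mul_of_nonneg_left hee this
    -- finite part bound
    have hfin : (∑ t ∈ Finset.range T, u t) ≤ 2 * q * Real.exp (-(γ' * dij)) := by
      rcases Nat.eq_zero_or_pos T with hT0 | hTpos
      · rw [hT0]
        simp only [Finset.range_zero, Finset.sum_empty]
        positivity
      · obtain ⟨T', rfl⟩ : ∃ T', T = T' + 1 :=
          ⟨T - 1, (Nat.succ_pred_eq_of_pos hTpos).symm⟩
        have hT2 : 2 * (T':ℝ) + m < x := by
          have h8 : T' < ⌈(x - (m:ℝ)) / 2⌉₊ := by
            rw [← hT]; exact Nat.lt_succ_self T'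
          have h9 : (T':ℝ) < (x - (m:ℝ)) / 2 := Nat.lt_ceil.1 h8
          linarith
        set r := (a * (N:ℝ)) ^ 2 with hr
        have hr4 : (4:ℝ) ≤ r := by rw [hr]; nlinarith
        have hgeo : ∑ t ∈ Finset.range (T' + 1), r ^ t ≤ (4/3) * r ^ T' := by
          rw [geom_sum_eq (by nlinarith : r ≠ 1)]
          rw [div_le_iff₀ (by nlinarith : (0:ℝ) < r - 1)]
          have hp : r ^ (T' + 1) = r ^ T' * r := pow_succ r T'
          have hrT : (0:ℝ) ≤ r ^ T' := by positivity
          nlinarith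
        have hstep : (∑ t ∈ Finset.range (T' + 1), u t)
            ≤ (q * (a * N) ^ m * Real.exp (-γ * dij)) * ∑ t ∈ Finset.range (T' + 1), r ^ t := by
          rw [Finset.mul_sum]
          refine Finset.sum_le_sum fun t _ => ?_
          refine (ub1 t).trans (le_of_eq ?_)
          rw [hr, ← pow_mul, show 2 * t + m = m + 2 * t by ring, pow_add]
          ring
        have hfinal : (q * (a * N) ^ m * Real.exp (-γ * dij)) * ((4/3) * r ^ T')
            ≤ 2 * q * Real.exp (-(γ' * dij)) := by
          have h10 : (a * (N:ℝ)) ^ m * r ^ T' = (a * N) ^ (2 * T' + m) := by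
            rw [hr, ← pow_mul, ← pow_add, show m + 2 * T' = 2 * T' + m by ring]
          have h11 : ((a:ℝ) * N) ^ (2 * T' + m) * Real.exp (-γ * dij)
              ≤ Real.exp (-(γ' * dij)) := by
            rw [hpow (2 * T' + m), ← Real.exp_add]
            apply Real.exp_le_exp.2
            have h12 : ((2 * T' + m : ℕ):ℝ) * L ≤ x * L := by
              apply mul_le_mul_of_nonneg_right _ hL.le
              push_cast
              linarith
            linarith [key2]
          calc (q * (a * N) ^ m * Real.exp (-γ * dij)) * ((4/3) * r ^ T')
              = (4/3) * q * ((a * N) ^ (2 * T' + m) * Real.exp (-γ * dij)) := by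
                rw [← h10]; ring
            _ ≤ (4/3) * q * Real.exp (-(γ' * dij)) := by
                apply mul_le_mul_of_nonneg_left h11 (by positivity)
            _ ≤ 2 * q * Real.exp (-(γ' * dij)) := by
                have := Real.exp_pos (-(γ' * dij))
                nlinarith
        calc (∑ t ∈ Finset.range (T' + 1), u t)
            ≤ (q * (a * N) ^ m * Real.exp (-γ * dij)) * ∑ t ∈ Finset.range (T' + 1), r ^ t :=
              hstep
          _ ≤ (q * (a * N) ^ m * Real.exp (-γ * dij)) * ((4/3) * r ^ T') := by
              apply mul_le_mul_of_nonneg_left hgeo (by positivity)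
          _ ≤ 2 * q * Real.exp (-(γ' * dij)) := hfinal
    -- combine
    have hdiv : C / (1 - E) = C * (1 - E)⁻¹ := div_eq_mul_inv _ _
    have : ‖blk (Gmat A Q * A ^ m) i j‖
        ≤ (C / (1 - E) + 2 * q) * Real.exp (-(γ' * dij)) := by
      rw [hdiv]
      calc ‖blk (Gmat A Q * A ^ m) i j‖ ≤ ∑' t, u t := hmain
        _ = (∑ t ∈ Finset.range T, u t) + ∑' t, u (t + T) := hsplit.symm
        _ ≤ 2 * q * Real.exp (-(γ' * dij)) + C * (1 - E)⁻¹ * Real.exp (-(γ' * dij)) :=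
            add_le_add hfin htail
        _ = (C * (1 - E)⁻¹ + 2 * q) * Real.exp (-(γ' * dij)) := by ring
    refine this.trans (le_of_eq ?_)
    rw [neg_mul, hγ'def]
  · -- Part 2 : S * A ^ m
    intro i j
    set dij := dist i j with hdij
    have hd0 : 0 ≤ dij := hdist.nonneg i j
    set x := γ * dij / (ρ + L) with hx
    have key1 : ρ * x = γ' * dij := by
      rw [hx, hγ'def]; field_simp
    have key2 : x * L - γ * dij = -(γ' * dij) := by
      rw [hx, hγ'def]; field_simp; ring
    have b1 : ‖blk (S * A ^ m) i j‖ ≤ s * (a * N) ^ m * Real.exp (-γ * dij) :=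
      GASAhelp.sed_mul_pow hdist hγ.le hs.le ha0 hS hA m i j
    have b2 : ‖blk (S * A ^ m) i j‖ ≤ ‖S‖ * (τ * Real.exp (-ρ * m)) := by
      refine (GASAhelp.norm_blk_le _ i j).trans ?_
      refine (Matrix.l2_opNorm_mul S (A ^ m)).trans ?_
      exact mul_le_mul_of_nonneg_left (hAst m) hSn
    have hgoal : ‖blk (S * A ^ m) i j‖ ≤ (s + τ * ‖S‖) * Real.exp (-(γ' * dij)) := by
      rcases le_or_gt x m with hcase | hcase
      · have hee : Real.exp (-ρ * m) ≤ Real.exp (-(γ' * dij)) := by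
          apply Real.exp_le_exp.2
          have h7 : ρ * x ≤ ρ * m := mul_le_mul_of_nonneg_left hcase hρ.le
          rw [← key1]
          linarith
        have h8 : ‖S‖ * (τ * Real.exp (-ρ * m)) ≤ τ * ‖S‖ * Real.exp (-(γ' * dij)) := by
          calc ‖S‖ * (τ * Real.exp (-ρ * m)) = τ * ‖S‖ * Real.exp (-ρ * m) := by ring
            _ ≤ τ * ‖S‖ * Real.exp (-(γ' * dij)) := by
                apply mul_le_mul_of_nonneg_left hee (by positivity)
        have h9 := le_trans b2 h8
        have h10 : (0:ℝ) < s * Real.exp (-(γ' * dij)) := by positivity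
        nlinarith [Real.exp_pos (-(γ' * dij))]
      · have h11 : s * (a * N) ^ m * Real.exp (-γ * dij) ≤ s * Real.exp (-(γ' * dij)) := by
          rw [hpow m, mul_assoc, ← Real.exp_add]
          apply mul_le_mul_of_nonneg_left _ hs.le
          apply Real.exp_le_exp.2
          have h12 : (m:ℝ) * L ≤ x * L := mul_le_mul_of_nonneg_right hcase.le hL.le
          linarith [key2]
        have h13 := le_trans b1 h11
        have h14 : (0:ℝ) ≤ τ * ‖S‖ * Real.exp (-(γ' * dij)) := by positivity
        nlinarith
    refine hgoal.trans (le_of_eq ?_)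
    rw [neg_mul, hγ'def]
end
end

section
/- Let H ≥ 1 and let M be an H×H block matrix with blocks M_{km} ∈ ℝ^{n_u×n_u} (1 ≤ k,m ≤ H) and J an H×1 block matrix with blocks J_k ∈ ℝ^{n_u×n_x}, such that: (1) every M_{km} is (c_M,γ_M)-SED and every J_k is (c_J,γ_M)-SED, with c_M, c_J ≥ 1; and (2) λ_min·I ⪯ M ⪯ λ_max·I with 0 < λ_min ≤ λ_max and λ_max ≥ 1. Then L := −M⁻¹J, with blocks L_k ∈ ℝ^{n_u×n_x}, satisfies that every L_k is (c_L, γ_L)-SED, where c_L = ‖J‖/λ_min + 2c_J and γ_L = λ_min·γ_M/(λ_max·ln(c_M·N·H + 1) + λ_min). -/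
open scoped Matrix.Norms.L2Operator
open Matrix

noncomputable section

section NeumannAux

set_option linter.unusedSectionVars false


namespace NSED
variable {ι ι' ι'' κ κ' : Type*} [Fintype ι] [DecidableEq ι] [Fintype κ] [DecidableEq κ]
  [Fintype ι'] [DecidableEq ι'] [Fintype κ'] [DecidableEq κ'] [Fintype ι''] [DecidableEq ι'']

/-- selection matrix -/
def sel (f : κ → ι) : Matrix ι κ ℝ := Matrix.of fun p a => if p = f a then 1 else 0

lemma sel_tmul {f : κ → ι} (hf : Function.Injective f) :
    (sel f)ᵀ * sel f = (1 : Matrix κ κ ℝ) := by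
  ext a b
  simp only [Matrix.mul_apply, Matrix.transpose_apply, sel, Matrix.of_apply, Matrix.one_apply,
    ite_mul, one_mul, zero_mul]
  rw [Finset.sum_ite_eq' Finset.univ (f a)]
  simp [hf.eq_iff, eq_comm]

lemma norm_one_le : ‖(1 : Matrix κ κ ℝ)‖ ≤ 1 := by
  rw [Matrix.l2_opNorm_def]
  refine ContinuousLinearMap.opNorm_le_bound _ zero_le_one fun x => ?_
  have : (Matrix.toEuclideanLin.trans LinearMap.toContinuousLinearMap
      (1 : Matrix κ κ ℝ)) x = x := by
    ext i
    simp [Matrix.toEuclideanLin_apply]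
  rw [this, one_mul]

lemma norm_sel_le {f : κ → ι} (hf : Function.Injective f) : ‖sel f‖ ≤ 1 := by
  have h := Matrix.l2_opNorm_conjTranspose_mul_self (sel f)
  rw [Matrix.conjTranspose_eq_transpose_of_trivial, sel_tmul hf] at h
  nlinarith [norm_nonneg (sel f), norm_one_le (κ := κ)]

lemma sel_conj (X : Matrix ι ι' ℝ) (f : κ → ι) (g : κ' → ι') :
    (sel f)ᵀ * X * sel g = Matrix.of (fun a b => X (f a) (g b)) := by
  ext a b
  simp only [Matrix.mul_apply, Matrix.transpose_apply, sel, Matrix.of_apply, ite_mul, one_mul,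
    zero_mul, mul_ite, mul_one, mul_zero]
  simp [Finset.sum_ite_eq' Finset.univ]

lemma norm_blk_le (X : Matrix ι ι' ℝ) {f : κ → ι} {g : κ' → ι'}
    (hf : Function.Injective f) (hg : Function.Injective g) :
    ‖Matrix.of (fun a b => X (f a) (g b))‖ ≤ ‖X‖ := by
  rw [← sel_conj X f g]
  have h1 : ‖(sel f)ᵀ‖ = ‖sel f‖ := by
    rw [← Matrix.conjTranspose_eq_transpose_of_trivial, Matrix.l2_opNorm_conjTranspose]
  calc ‖(sel f)ᵀ * X * sel g‖ ≤ ‖(sel f)ᵀ * X‖ * ‖sel g‖ := Matrix.l2_opNorm_mul _ _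
    _ ≤ (‖(sel f)ᵀ‖ * ‖X‖) * ‖sel g‖ :=
        mul_le_mul_of_nonneg_right (Matrix.l2_opNorm_mul _ _) (norm_nonneg _)
    _ ≤ (1 * ‖X‖) * 1 := by
        rw [h1]
        gcongr
        · exact norm_sel_le hf
        · exact norm_sel_le hg
    _ = ‖X‖ := by ring

lemma sel_resolution {α : Type*} [Fintype α] {κα : α → Type*} [∀ a, Fintype (κα a)]
    (e : (Σ a, κα a) ≃ ι) :
    ∑ a : α, sel (fun x : κα a => e ⟨a, x⟩) * (sel (fun x : κα a => e ⟨a, x⟩))ᵀ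
      = (1 : Matrix ι ι ℝ) := by
  ext p q
  simp only [Matrix.sum_apply, Matrix.mul_apply, Matrix.transpose_apply, sel,
    Matrix.of_apply, ite_mul, one_mul, zero_mul, mul_ite, mul_one, mul_zero]
  rw [Finset.sum_sigma']
  rw [Finset.univ_sigma_univ]
  rw [Fintype.sum_equiv e (fun x : (Σ a, κα a) => if q = e ⟨x.fst, x.snd⟩ then if p = e ⟨x.fst, x.snd⟩ then (1:ℝ) else 0 else 0)
    (fun y : ι => if q = y then if p = y then (1:ℝ) else 0 else 0) (fun x => by rfl)]
  rw [Finset.sum_ite_eq Finset.univ q (fun y => if p = y then (1:ℝ) else 0)]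
  simp [Matrix.one_apply, eq_comm]

end NSED

namespace NSED
variable {κ : Type*} [Fintype κ] [DecidableEq κ]

lemma psd_smul {A : Matrix κ κ ℝ} (hA : A.PosSemidef) {c : ℝ} (hc : 0 ≤ c) :
    (c • A).PosSemidef := by
  constructor
  · unfold Matrix.IsHermitian
    rw [Matrix.conjTranspose_smul, hA.1.eq]
    simp
  · exact (hA.smul hc).2

open scoped MatrixOrder in
lemma norm_le_of_psd {A : Matrix κ κ ℝ} {η : ℝ} (hη : 0 ≤ η) (h1 : A.PosSemidef)
    (h2 : (η • (1 : Matrix κ κ ℝ) - A).PosSemidef) : ‖A‖ ≤ η := by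
  rw [Matrix.l2_opNorm_def]
  refine ContinuousLinearMap.opNorm_le_bound _ hη fun x => ?_
  set v : κ → ℝ := (WithLp.equiv 2 (κ → ℝ)) x with hv
  set y := (Matrix.toEuclideanLin.trans LinearMap.toContinuousLinearMap A) x with hy
  have hyv : ∀ i, y i = (A *ᵥ v) i := fun i => rfl
  -- squared norms as dot products
  have hny : ‖y‖ ^ 2 = (A *ᵥ v) ⬝ᵥ (A *ᵥ v) := by
    rw [← real_inner_self_eq_norm_sq]
    simp only [PiLp.inner_apply, RCLike.inner_apply, conj_trivial]
    simp [dotProduct, hyv]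
  have hnx : ‖x‖ ^ 2 = v ⬝ᵥ v := by
    rw [← real_inner_self_eq_norm_sq]
    simp only [PiLp.inner_apply, RCLike.inner_apply, conj_trivial]
    simp [dotProduct, hv]
  -- symmetry
  have hAt : Aᵀ = A := by
    rw [← Matrix.conjTranspose_eq_transpose_of_trivial]
    exact h1.1
  -- sqrt
  set S := CFC.sqrt A with hS
  have hSS : S * S = A := CFC.sqrt_mul_sqrt_self A h1.nonneg
  have hSH : Sᴴ = S := (CFC.sqrt_nonneg A).posSemidef.1
  have hkey : (η • A - A * A).PosSemidef := by
    have h3 : (Sᴴ * (η • (1 : Matrix κ κ ℝ) - A) * S).PosSemidef :=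
      h2.conjTranspose_mul_mul_same S
    have h4 : Sᴴ * (η • (1 : Matrix κ κ ℝ) - A) * S = η • A - A * A := by
      rw [hSH]
      have : S * (η • (1 : Matrix κ κ ℝ) - A) * S
          = η • (S * S) - (S * S) * (S * S) := by
        rw [← hSS]
        noncomm_ring
      rw [this, hSS]
    rwa [h4] at h3
  -- inequalities
  have q2 : (A *ᵥ v) ⬝ᵥ (A *ᵥ v) ≤ η * (v ⬝ᵥ (A *ᵥ v)) := by
    have := hkey.dotProduct_mulVec_nonneg v
    simp only [star_trivial, Matrix.sub_mulVec, Matrix.smul_mulVec,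
      dotProduct_sub, dotProduct_smul, smul_eq_mul] at this
    have hvA : v ᵥ* A = A *ᵥ v := by
      nth_rewrite 1 [← hAt]
      rw [Matrix.vecMul_transpose]
    have hrw : v ⬝ᵥ ((A * A) *ᵥ v) = (A *ᵥ v) ⬝ᵥ (A *ᵥ v) := by
      rw [← Matrix.mulVec_mulVec, Matrix.dotProduct_mulVec, hvA]
    linarith [hrw ▸ this]
  have q1 : v ⬝ᵥ (A *ᵥ v) ≤ η * (v ⬝ᵥ v) := by
    have := h2.dotProduct_mulVec_nonneg v
    simp only [star_trivial, Matrix.sub_mulVec, Matrix.smul_mulVec,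
      dotProduct_sub, dotProduct_smul, smul_eq_mul, Matrix.one_mulVec] at this
    linarith
  have hsq : ‖y‖ ^ 2 ≤ (η * ‖x‖) ^ 2 := by
    have h0 : 0 ≤ v ⬝ᵥ v := by rw [← hnx]; positivity
    calc ‖y‖ ^ 2 = (A *ᵥ v) ⬝ᵥ (A *ᵥ v) := hny
      _ ≤ η * (v ⬝ᵥ (A *ᵥ v)) := q2
      _ ≤ η * (η * (v ⬝ᵥ v)) := by
          exact mul_le_mul_of_nonneg_left q1 hη
      _ = (η * ‖x‖) ^ 2 := by rw [show v ⬝ᵥ v = ‖x‖ ^ 2 from hnx.symm]; ring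
  nlinarith [norm_nonneg y, norm_nonneg x, mul_nonneg hη (norm_nonneg x)]

end NSED

section Main
open NSED

variable {N : ℕ} {nxd nud : Fin N → ℕ} {H : ℕ}

/-- row-block embedding -/
def fI (k : Fin H) (i : Fin N) : Fin (nud i) → Fin H × BIdx nud := fun a => (k, ⟨i, a⟩)

def gI (j : Fin N) : Fin (nxd j) → BIdx nxd := fun b => ⟨j, b⟩

lemma fI_inj (k : Fin H) (i : Fin N) : Function.Injective (fI (nud := nud) k i) :=
  fun a b hab => by simpa [fI] using hab

lemma gI_inj (j : Fin N) : Function.Injective (gI (nxd := nxd) j) :=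
  fun a b hab => by simpa [gI] using hab

/-- the sigma-decomposition of the compound index -/
def eI : (Σ p : Fin H × Fin N, Fin (nud p.2)) ≃ Fin H × BIdx nud where
  toFun s := (s.1.1, ⟨s.1.2, s.2⟩)
  invFun q := ⟨(q.1, q.2.1), q.2.2⟩
  left_inv s := rfl
  right_inv q := rfl

theorem sed_step
    (hN : 1 ≤ N) (dist : Fin N → Fin N → ℝ) (hdist : IsDist dist) (hH : 1 ≤ H)
    (M : Matrix (Fin H × BIdx nud) (Fin H × BIdx nud) ℝ)
    (J : Matrix (Fin H × BIdx nud) (BIdx nxd) ℝ)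
    (cM cJ γM : ℝ) (hcM : 1 ≤ cM) (hcJ : 1 ≤ cJ) (hγM : 0 < γM)
    (hMsed : ∀ k m : Fin H, IsSED dist cM γM (Matrix.of fun a b => M (k, a) (m, b)))
    (hJsed : ∀ k : Fin H, IsSED dist cJ γM (Matrix.of fun a b => J (k, a) b))
    (lmax : ℝ) (hlmax : 1 ≤ lmax) :
    ∀ t : ℕ, ∀ (k : Fin H) (i j : Fin N),
      ‖(sel (fI (nud := nud) k i))ᵀ * (((1 : Matrix (Fin H × BIdx nud) (Fin H × BIdx nud) ℝ)
          - lmax⁻¹ • M) ^ t * J) * sel (gI (nxd := nxd) j)‖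
        ≤ cJ * (cM * N * H + 1) ^ t * Real.exp (-γM * dist i j) := by
  set A : Matrix (Fin H × BIdx nud) (Fin H × BIdx nud) ℝ := 1 - lmax⁻¹ • M with hA
  have hlmax0 : (0:ℝ) < lmax := by linarith
  have hNr : (1:ℝ) ≤ (N:ℝ) := by exact_mod_cast hN
  have hHr : (1:ℝ) ≤ (H:ℝ) := by exact_mod_cast hH
  intro t
  induction t with
  | zero =>
    intro k i j
    rw [pow_zero, Matrix.one_mul, sel_conj]
    have h := hJsed k i j
    simpa [blk, fI, gI] using h
  | succ t ih =>
    intro k i j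
    have hstep : A ^ (t+1) * J = (A ^ t * J) - lmax⁻¹ • (M * (A ^ t * J)) := by
      rw [pow_succ', Matrix.mul_assoc, hA, Matrix.sub_mul, Matrix.one_mul, Matrix.smul_mul]
    rw [hstep]
    have hlin : (sel (fI (nud := nud) k i))ᵀ * ((A^t*J) - lmax⁻¹ • (M*(A^t*J))) * sel (gI (nxd := nxd) j)
        = (sel (fI (nud := nud) k i))ᵀ * (A^t*J) * sel (gI (nxd := nxd) j)
          - lmax⁻¹ • ((sel (fI (nud := nud) k i))ᵀ * (M*(A^t*J)) * sel (gI (nxd := nxd) j)) := by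
      rw [Matrix.mul_sub, Matrix.sub_mul, Matrix.mul_smul, Matrix.smul_mul]
    rw [hlin]
    have hdecomp : (sel (fI (nud := nud) k i))ᵀ * (M*(A^t*J)) * sel (gI (nxd := nxd) j)
        = ∑ p : Fin H × Fin N,
            ((sel (fI (nud := nud) k i))ᵀ * M * sel (fI (nud := nud) p.1 p.2))
              * ((sel (fI (nud := nud) p.1 p.2))ᵀ * (A^t*J) * sel (gI (nxd := nxd) j)) := by
      have hres := sel_resolution (ι := Fin H × BIdx nud) (eI (nud := nud))
      have hself : ∀ p : Fin H × Fin N,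
          sel (fun x : Fin (nud p.2) => (eI (nud := nud)) ⟨p, x⟩) = sel (fI (nud := nud) p.1 p.2) :=
        fun p => rfl
      have hmid : M * (A^t*J) = ∑ p : Fin H × Fin N,
          (M * sel (fI (nud := nud) p.1 p.2)) * ((sel (fI (nud := nud) p.1 p.2))ᵀ * (A^t*J)) := by
        calc M * (A^t*J)
            = M * ((∑ p : Fin H × Fin N,
                sel (fun x : Fin (nud p.2) => (eI (nud := nud)) ⟨p, x⟩)
                  * (sel (fun x : Fin (nud p.2) => (eI (nud := nud)) ⟨p, x⟩))ᵀ) * (A^t*J)) := by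
              rw [hres, Matrix.one_mul]
          _ = ∑ p : Fin H × Fin N,
                (M * sel (fI (nud := nud) p.1 p.2)) * ((sel (fI (nud := nud) p.1 p.2))ᵀ * (A^t*J)) := by
              simp only [hself]
              rw [Matrix.sum_mul, Matrix.mul_sum]
              exact Finset.sum_congr rfl fun p _ => by simp only [Matrix.mul_assoc]
      rw [hmid, Matrix.mul_sum, Matrix.sum_mul]
      exact Finset.sum_congr rfl fun p _ => by simp only [Matrix.mul_assoc]
    have hterm : ‖(sel (fI (nud := nud) k i))ᵀ * (M*(A^t*J)) * sel (gI (nxd := nxd) j)‖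
        ≤ (H * N) * (cM * (cJ * (cM*N*H+1)^t) * Real.exp (-γM * dist i j)) := by
      rw [hdecomp]
      calc ‖∑ p : Fin H × Fin N, ((sel (fI (nud := nud) k i))ᵀ * M * sel (fI (nud := nud) p.1 p.2))
              * ((sel (fI (nud := nud) p.1 p.2))ᵀ * (A^t*J) * sel (gI (nxd := nxd) j))‖
          ≤ ∑ p : Fin H × Fin N, ‖((sel (fI (nud := nud) k i))ᵀ * M * sel (fI (nud := nud) p.1 p.2))
              * ((sel (fI (nud := nud) p.1 p.2))ᵀ * (A^t*J) * sel (gI (nxd := nxd) j))‖ := norm_sum_le _ _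
        _ ≤ ∑ _p : Fin H × Fin N, cM * (cJ * (cM*N*H+1)^t) * Real.exp (-γM * dist i j) := by
            refine Finset.sum_le_sum fun p _ => ?_
            have h1 : ‖(sel (fI (nud := nud) k i))ᵀ * M * sel (fI (nud := nud) p.1 p.2)‖
                ≤ cM * Real.exp (-γM * dist i p.2) := by
              rw [sel_conj]
              have := hMsed k p.1 i p.2
              simpa [blk, fI] using this
            have h2 := ih p.1 p.2 j
            have hprod := mul_le_mul h1 h2 (norm_nonneg _)
              (by positivity)
            calc ‖_ * _‖ ≤ ‖(sel (fI (nud := nud) k i))ᵀ * M * sel (fI (nud := nud) p.1 p.2)‖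
                  * ‖(sel (fI (nud := nud) p.1 p.2))ᵀ * (A^t*J) * sel (gI (nxd := nxd) j)‖ := Matrix.l2_opNorm_mul _ _
              _ ≤ (cM * Real.exp (-γM * dist i p.2))
                  * (cJ * (cM*N*H+1)^t * Real.exp (-γM * dist p.2 j)) :=
                  mul_le_mul h1 h2 (norm_nonneg _) (by positivity)
              _ ≤ cM * (cJ * (cM*N*H+1)^t) * Real.exp (-γM * dist i j) := by
                  have htri : dist i j ≤ dist i p.2 + dist p.2 j := hdist.triangle i j p.2
                  have hexp : Real.exp (-γM * dist i p.2) * Real.exp (-γM * dist p.2 j)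
                      ≤ Real.exp (-γM * dist i j) := by
                    rw [← Real.exp_add]
                    apply Real.exp_le_exp.2
                    nlinarith
                  have hc : (0:ℝ) ≤ cM * (cJ * (cM*N*H+1)^t) := by positivity
                  calc (cM * Real.exp (-γM * dist i p.2))
                      * (cJ * (cM*N*H+1)^t * Real.exp (-γM * dist p.2 j))
                      = cM * (cJ * (cM*N*H+1)^t)
                        * (Real.exp (-γM * dist i p.2) * Real.exp (-γM * dist p.2 j)) := by ring
                    _ ≤ cM * (cJ * (cM*N*H+1)^t) * Real.exp (-γM * dist i j) :=
                        mul_le_mul_of_nonneg_left hexp hc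
        _ = (H * N) * (cM * (cJ * (cM*N*H+1)^t) * Real.exp (-γM * dist i j)) := by
            rw [Finset.sum_const, Finset.card_univ, Fintype.card_prod, Fintype.card_fin,
              Fintype.card_fin, nsmul_eq_mul]
            push_cast
            ring
    have hfirst := ih k i j
    calc ‖(sel (fI (nud := nud) k i))ᵀ * (A^t*J) * sel (gI (nxd := nxd) j)
          - lmax⁻¹ • ((sel (fI (nud := nud) k i))ᵀ * (M*(A^t*J)) * sel (gI (nxd := nxd) j))‖
        ≤ ‖(sel (fI (nud := nud) k i))ᵀ * (A^t*J) * sel (gI (nxd := nxd) j)‖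
          + ‖lmax⁻¹ • ((sel (fI (nud := nud) k i))ᵀ * (M*(A^t*J)) * sel (gI (nxd := nxd) j))‖ := norm_sub_le _ _
      _ ≤ cJ * (cM*N*H+1)^t * Real.exp (-γM * dist i j)
          + lmax⁻¹ * ((H * N) * (cM * (cJ * (cM*N*H+1)^t) * Real.exp (-γM * dist i j))) := by
          have hns : ‖lmax⁻¹ • ((sel (fI (nud := nud) k i))ᵀ * (M*(A^t*J)) * sel (gI (nxd := nxd) j))‖
              = lmax⁻¹ * ‖(sel (fI (nud := nud) k i))ᵀ * (M*(A^t*J)) * sel (gI (nxd := nxd) j)‖ := by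
            rw [norm_smul, Real.norm_eq_abs, abs_of_pos (by positivity)]
          rw [hns]
          have := mul_le_mul_of_nonneg_left hterm (le_of_lt (inv_pos.2 hlmax0))
          linarith [hfirst]
      _ ≤ cJ * (cM*N*H+1)^(t+1) * Real.exp (-γM * dist i j) := by
          have hE : (0:ℝ) < Real.exp (-γM * dist i j) := Real.exp_pos _
          have hinv : lmax⁻¹ ≤ 1 := by
            rw [inv_le_one_iff₀]; right; exact hlmax
          have hβt : (0:ℝ) ≤ (cM*N*H+1)^t := by positivity
          have key : lmax⁻¹ * ((H * N) * (cM * (cJ * (cM*N*H+1)^t)))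
              ≤ (H*N*cM) * (cJ * (cM*N*H+1)^t) := by
            have h0 : (0:ℝ) ≤ (H * N) * (cM * (cJ * (cM*N*H+1)^t)) := by positivity
            nlinarith
          rw [pow_succ]
          nlinarith [hE, key, mul_le_mul_of_nonneg_right key (le_of_lt hE)]
end Main

set_option maxHeartbeats 1600000

open NSED in
/-- Lemma: SED structure of `L = -M⁻¹J` for well-conditioned SED block data. -/
theorem neumann_SED
    {N : ℕ} (hN : 1 ≤ N) {nxd nud : Fin N → ℕ}
    (hnx : ∀ i, 1 ≤ nxd i) (hnu : ∀ i, 1 ≤ nud i)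
    (dist : Fin N → Fin N → ℝ) (hdist : IsDist dist)
    (H : ℕ) (hH : 1 ≤ H)
    (M : Matrix (Fin H × BIdx nud) (Fin H × BIdx nud) ℝ)
    (J : Matrix (Fin H × BIdx nud) (BIdx nxd) ℝ)
    (cM cJ γM : ℝ) (hcM : 1 ≤ cM) (hcJ : 1 ≤ cJ) (hγM : 0 < γM)
    (hMsed : ∀ k m : Fin H, IsSED dist cM γM (Matrix.of fun a b => M (k, a) (m, b)))
    (hJsed : ∀ k : Fin H, IsSED dist cJ γM (Matrix.of fun a b => J (k, a) b))
    (lmin lmax : ℝ) (hlmin : 0 < lmin) (hle : lmin ≤ lmax) (hlmax : 1 ≤ lmax)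
    (hlow : (M - lmin • (1 : Matrix (Fin H × BIdx nud) (Fin H × BIdx nud) ℝ)).PosSemidef)
    (hup : (lmax • (1 : Matrix (Fin H × BIdx nud) (Fin H × BIdx nud) ℝ) - M).PosSemidef) :
    ∀ k : Fin H,
      IsSED dist (‖J‖ / lmin + 2 * cJ)
        (lmin * γM / (lmax * Real.log (cM * (N : ℝ) * (H : ℝ) + 1) + lmin))
        (Matrix.of fun a b => (-M⁻¹ * J) (k, a) b) := by
  have hlmax0 : (0:ℝ) < lmax := by linarith
  have hNr : (1:ℝ) ≤ (N:ℝ) := by exact_mod_cast hN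
  have hHr : (1:ℝ) ≤ (H:ℝ) := by exact_mod_cast hH
  set β : ℝ := cM * N * H + 1 with hβdef
  have hβ2 : (2:ℝ) ≤ β := by
    have h1 : (1:ℝ) ≤ cM * N := by nlinarith
    have : (1:ℝ) ≤ cM * N * H := by nlinarith
    simp only [hβdef]; linarith
  set Lβ : ℝ := Real.log β with hLβdef
  have hLβ : 0 < Lβ := Real.log_pos (by linarith)
  set μ : ℝ := lmin / lmax with hμdef
  have hμ0 : 0 < μ := div_pos hlmin hlmax0
  have hμ1 : μ ≤ 1 := by rw [hμdef, div_le_one hlmax0]; exact hle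
  set γL : ℝ := lmin * γM / (lmax * Lβ + lmin) with hγLdef
  set A : Matrix (Fin H × BIdx nud) (Fin H × BIdx nud) ℝ := 1 - lmax⁻¹ • M with hA
  -- PSD facts
  have hApsd : A.PosSemidef := by
    have h1 : A = lmax⁻¹ • (lmax • (1 : Matrix (Fin H × BIdx nud) (Fin H × BIdx nud) ℝ) - M) := by
      rw [smul_sub, smul_smul, inv_mul_cancel₀ (ne_of_gt hlmax0), one_smul, hA]
    rw [h1]
    exact psd_smul hup (le_of_lt (inv_pos.2 hlmax0))
  have hBpsd : ((1 - μ) • (1 : Matrix (Fin H × BIdx nud) (Fin H × BIdx nud) ℝ) - A).PosSemidef := by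
    have h1 : (1 - μ) • (1 : Matrix (Fin H × BIdx nud) (Fin H × BIdx nud) ℝ) - A
        = lmax⁻¹ • (M - lmin • (1 : Matrix (Fin H × BIdx nud) (Fin H × BIdx nud) ℝ)) := by
      rw [hA, hμdef, smul_sub, smul_smul]
      ext p q
      simp only [Matrix.sub_apply, Matrix.smul_apply, Matrix.one_apply, smul_eq_mul]
      by_cases h : p = q <;> simp [h] <;> field_simp
    rw [h1]
    exact psd_smul hlow (le_of_lt (inv_pos.2 hlmax0))
  have hAnorm : ‖A‖ ≤ 1 - μ := norm_le_of_psd (by linarith) hApsd hBpsd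
  have hApow : ∀ t : ℕ, ‖A ^ t‖ ≤ (1 - μ) ^ t := by
    intro t
    induction t with
    | zero => simpa using norm_one_le
    | succ t ih =>
      rw [pow_succ, pow_succ]
      calc ‖A ^ t * A‖ ≤ ‖A ^ t‖ * ‖A‖ := Matrix.l2_opNorm_mul _ _
        _ ≤ (1 - μ) ^ t * (1 - μ) := by
            apply mul_le_mul ih hAnorm (norm_nonneg _) (by
              have : (0:ℝ) ≤ 1 - μ := by linarith
              positivity)
  -- M invertibility
  have hMpd : M.PosDef := by
    have hdiag : (lmin • (1 : Matrix (Fin H × BIdx nud) (Fin H × BIdx nud) ℝ)).PosDef := by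
      rw [Matrix.smul_one_eq_diagonal]
      exact Matrix.posDef_diagonal_iff.2 fun _ => hlmin
    have := Matrix.PosDef.posSemidef_add hlow hdiag
    rwa [sub_add_cancel] at this
  have hMMinv : M * M⁻¹ = 1 :=
    Matrix.mul_nonsing_inv _ ((Matrix.isUnit_iff_isUnit_det M).mp hMpd.isUnit)
  -- norm of M⁻¹
  have hMinvNorm : ‖M⁻¹‖ ≤ 1 / lmin := by
    have hid : M⁻¹ = lmax⁻¹ • (1 : Matrix (Fin H × BIdx nud) (Fin H × BIdx nud) ℝ) + A * M⁻¹ := by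
      rw [hA, Matrix.sub_mul, Matrix.one_mul, Matrix.smul_mul, hMMinv]
      abel
    have h2 : ‖M⁻¹‖ ≤ lmax⁻¹ + (1 - μ) * ‖M⁻¹‖ := by
      calc ‖M⁻¹‖ = ‖lmax⁻¹ • (1 : Matrix (Fin H × BIdx nud) (Fin H × BIdx nud) ℝ) + A * M⁻¹‖ := by
            rw [← hid]
        _ ≤ ‖lmax⁻¹ • (1 : Matrix (Fin H × BIdx nud) (Fin H × BIdx nud) ℝ)‖ + ‖A * M⁻¹‖ :=
            norm_add_le _ _
        _ ≤ lmax⁻¹ + (1 - μ) * ‖M⁻¹‖ := by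
            have e1 : ‖lmax⁻¹ • (1 : Matrix (Fin H × BIdx nud) (Fin H × BIdx nud) ℝ)‖
                ≤ lmax⁻¹ := by
              rw [norm_smul, Real.norm_eq_abs, abs_of_pos (by positivity)]
              have := norm_one_le (κ := Fin H × BIdx nud)
              nlinarith [inv_pos.2 hlmax0]
            have e2 : ‖A * M⁻¹‖ ≤ (1 - μ) * ‖M⁻¹‖ :=
              le_trans (Matrix.l2_opNorm_mul _ _)
                (mul_le_mul_of_nonneg_right hAnorm (norm_nonneg _))
            linarith
    have hμM : μ * ‖M⁻¹‖ ≤ lmax⁻¹ := by nlinarith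
    have h3 : lmin * ‖M⁻¹‖ ≤ 1 := by
      calc lmin * ‖M⁻¹‖ = lmax * (μ * ‖M⁻¹‖) := by rw [hμdef]; field_simp
        _ ≤ lmax * lmax⁻¹ := mul_le_mul_of_nonneg_left hμM (le_of_lt hlmax0)
        _ = 1 := mul_inv_cancel₀ (ne_of_gt hlmax0)
    rw [le_div_iff₀ hlmin]
    linarith
  -- SED bounds for A^t * J
  have hsed : ∀ (t : ℕ) (k : Fin H) (i j : Fin N),
      ‖(sel (fI (nud := nud) k i))ᵀ * (A ^ t * J) * sel (gI (nxd := nxd) j)‖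
        ≤ cJ * β ^ t * Real.exp (-γM * dist i j) :=
    sed_step hN dist hdist hH M J cM cJ γM hcM hcJ hγM hMsed hJsed lmax hlmax
  intro k i j
  set D : ℝ := dist i j with hD
  have hD0 : 0 ≤ D := hdist.nonneg i j
  set xx : ℝ := γM * D / (Lβ + μ) with hxx
  have hxx0 : 0 ≤ xx := div_nonneg (mul_nonneg (le_of_lt hγM) hD0) (by linarith)
  set T : ℕ := ⌈xx⌉₊ with hT
  -- Neumann identity
  have hid : M⁻¹ = lmax⁻¹ • (∑ t ∈ Finset.range T, A ^ t) + A ^ T * M⁻¹ := by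
    have h1 : (∑ t ∈ Finset.range T, A ^ t) * (1 - A) = 1 - A ^ T := by
      have hg := geom_sum_mul A T
      have h2 : (∑ t ∈ Finset.range T, A ^ t) * (1 - A)
          = -((∑ t ∈ Finset.range T, A ^ t) * (A - 1)) := by noncomm_ring
      rw [h2, hg, neg_sub]
    have h3 : (1 : Matrix (Fin H × BIdx nud) (Fin H × BIdx nud) ℝ) - A = lmax⁻¹ • M := by
      rw [hA, sub_sub_cancel]
    rw [h3, Matrix.mul_smul] at h1
    have h4 := congrArg (fun X => X * M⁻¹) h1
    simp only [Matrix.smul_mul, Matrix.sub_mul, Matrix.one_mul] at h4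
    rw [Matrix.mul_assoc, hMMinv, Matrix.mul_one] at h4
    rw [h4]
    abel
  have hLdecomp : -M⁻¹ * J
      = -(lmax⁻¹ • ((∑ t ∈ Finset.range T, A ^ t) * J)) - A ^ T * (M⁻¹ * J) := by
    calc -M⁻¹ * J = -(M⁻¹ * J) := Matrix.neg_mul _ _
      _ = -((lmax⁻¹ • (∑ t ∈ Finset.range T, A ^ t) + A ^ T * M⁻¹) * J) := by rw [← hid]
      _ = -(lmax⁻¹ • ((∑ t ∈ Finset.range T, A ^ t) * J)) - A ^ T * (M⁻¹ * J) := by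
          rw [Matrix.add_mul, Matrix.smul_mul, Matrix.mul_assoc, neg_add]
          abel
  have hblk : blk (Matrix.of fun (a : BIdx nud) (b : BIdx nxd) => (-M⁻¹ * J) (k, a) b) i j
      = (sel (fI (nud := nud) k i))ᵀ * (-M⁻¹ * J) * sel (gI (nxd := nxd) j) := by
    rw [sel_conj]; rfl
  show ‖blk (Matrix.of fun a b => (-M⁻¹ * J) (k, a) b) i j‖
      ≤ (‖J‖ / lmin + 2 * cJ) * Real.exp (-γL * D)
  rw [hblk, hLdecomp]
  simp only [Matrix.mul_sub, Matrix.sub_mul, Matrix.mul_neg, Matrix.neg_mul, Matrix.mul_smul,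
    Matrix.smul_mul]
  -- bound the two pieces
  have hpiece1 : ‖(sel (fI (nud := nud) k i))ᵀ * ((∑ t ∈ Finset.range T, A ^ t) * J) * sel (gI (nxd := nxd) j)‖
      ≤ cJ * (∑ t ∈ Finset.range T, β ^ t) * Real.exp (-γM * D) := by
    have hsumeq : (sel (fI (nud := nud) k i))ᵀ * ((∑ t ∈ Finset.range T, A ^ t) * J) * sel (gI (nxd := nxd) j)
        = ∑ t ∈ Finset.range T, (sel (fI (nud := nud) k i))ᵀ * (A ^ t * J) * sel (gI (nxd := nxd) j) := by
      rw [Matrix.sum_mul, Matrix.mul_sum, Matrix.sum_mul]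
    rw [hsumeq]
    calc ‖∑ t ∈ Finset.range T, (sel (fI (nud := nud) k i))ᵀ * (A ^ t * J) * sel (gI (nxd := nxd) j)‖
        ≤ ∑ t ∈ Finset.range T, ‖(sel (fI (nud := nud) k i))ᵀ * (A ^ t * J) * sel (gI (nxd := nxd) j)‖ := norm_sum_le _ _
      _ ≤ ∑ t ∈ Finset.range T, cJ * β ^ t * Real.exp (-γM * D) :=
          Finset.sum_le_sum fun t _ => hsed t k i j
      _ = cJ * (∑ t ∈ Finset.range T, β ^ t) * Real.exp (-γM * D) := by
          rw [← Finset.sum_mul, ← Finset.mul_sum]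
  have hpiece2 : ‖(sel (fI (nud := nud) k i))ᵀ * (A ^ T * (M⁻¹ * J)) * sel (gI (nxd := nxd) j)‖
      ≤ (1 - μ) ^ T * ((1 / lmin) * ‖J‖) := by
    calc ‖(sel (fI (nud := nud) k i))ᵀ * (A ^ T * (M⁻¹ * J)) * sel (gI (nxd := nxd) j)‖
        ≤ ‖A ^ T * (M⁻¹ * J)‖ := by
          rw [sel_conj]
          exact norm_blk_le _ (fI_inj k i) (gI_inj j)
      _ ≤ ‖A ^ T‖ * ‖M⁻¹ * J‖ := Matrix.l2_opNorm_mul _ _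
      _ ≤ (1 - μ) ^ T * ((1 / lmin) * ‖J‖) := by
          have h1 : ‖M⁻¹ * J‖ ≤ (1 / lmin) * ‖J‖ :=
            le_trans (Matrix.l2_opNorm_mul _ _)
              (mul_le_mul_of_nonneg_right hMinvNorm (norm_nonneg _))
          apply mul_le_mul (hApow T) h1 (norm_nonneg _) (by
            have : (0:ℝ) ≤ 1 - μ := by linarith
            positivity)
  -- numeric facts
  have hβ0 : (0:ℝ) < β := by linarith
  have hβ1 : (1:ℝ) < β := by linarith
  have hE : (0:ℝ) < Real.exp (-γM * D) := Real.exp_pos _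
  have hE' : (0:ℝ) < Real.exp (xx * Lβ) := Real.exp_pos _
  have hdenom1 : (0:ℝ) < Lβ + μ := by linarith
  have hdenom2 : (0:ℝ) < lmax * Lβ + lmin := add_pos (mul_pos hlmax0 hLβ) hlmin
  have n1 : (∑ t ∈ Finset.range T, β ^ t) ≤ 2 * Real.exp (xx * Lβ) := by
    have hTx : (T:ℝ) ≤ xx + 1 := le_of_lt (Nat.ceil_lt_add_one hxx0)
    have e5 : β ^ T ≤ β * Real.exp (xx * Lβ) := by
      calc (β:ℝ) ^ T = β ^ (T:ℝ) := (Real.rpow_natCast β T).symm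
        _ ≤ β ^ (xx + 1) := Real.rpow_le_rpow_of_exponent_le (le_of_lt hβ1) hTx
        _ = β * Real.exp (xx * Lβ) := by
            rw [Real.rpow_add hβ0, Real.rpow_one, Real.rpow_def_of_pos hβ0, mul_comm (Real.log β) xx]
            rw [hLβdef]
            ring
    rw [geom_sum_eq (ne_of_gt hβ1) T, div_le_iff₀ (by linarith : (0:ℝ) < β - 1)]
    nlinarith
  have n2 : Real.exp (xx * Lβ) * Real.exp (-γM * D) = Real.exp (-γL * D) := by
    rw [← Real.exp_add]
    congr 1
    rw [hxx, hγLdef, hμdef]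
    field_simp
    ring
  have n3 : (1 - μ) ^ T ≤ Real.exp (-γL * D) := by
    have p1 : (1 - μ) ≤ Real.exp (-μ) := by
      have := Real.add_one_le_exp (-μ); linarith
    have p2 : (1 - μ) ^ T ≤ Real.exp (-μ) ^ T := pow_le_pow_left₀ (by linarith) p1 T
    have p3 : Real.exp (-μ) ^ T = Real.exp ((T:ℝ) * (-μ)) := (Real.exp_nat_mul _ T).symm
    have pμxx : μ * xx = γL * D := by
      rw [hxx, hγLdef, hμdef]
      field_simp
    have p4 : (T:ℝ) * (-μ) ≤ -γL * D := by
      have hTge : xx ≤ (T:ℝ) := Nat.le_ceil xx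
      nlinarith
    calc (1 - μ) ^ T ≤ Real.exp ((T:ℝ) * (-μ)) := by rw [← p3]; exact p2
      _ ≤ Real.exp (-γL * D) := Real.exp_le_exp.2 p4
  -- final combination
  have hinv1 : lmax⁻¹ ≤ 1 := by rw [inv_le_one_iff₀]; right; exact hlmax
  have hsum0 : (0:ℝ) ≤ ∑ t ∈ Finset.range T, β ^ t :=
    Finset.sum_nonneg fun t _ => pow_nonneg (le_of_lt hβ0) t
  have t1 : lmax⁻¹ * (cJ * (∑ t ∈ Finset.range T, β ^ t) * Real.exp (-γM * D))
      ≤ 2 * cJ * Real.exp (-γL * D) := by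
    have h1 : cJ * (∑ t ∈ Finset.range T, β ^ t) * Real.exp (-γM * D)
        ≤ cJ * (2 * Real.exp (xx * Lβ)) * Real.exp (-γM * D) := by
      have := mul_le_mul_of_nonneg_left n1 (by linarith : (0:ℝ) ≤ cJ)
      exact mul_le_mul_of_nonneg_right this (le_of_lt hE)
    have h2 : cJ * (2 * Real.exp (xx * Lβ)) * Real.exp (-γM * D)
        = 2 * cJ * Real.exp (-γL * D) := by
      rw [← n2]; ring
    have h0 : (0:ℝ) ≤ cJ * (∑ t ∈ Finset.range T, β ^ t) * Real.exp (-γM * D) := by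
      have hcJ0 : (0:ℝ) ≤ cJ := by linarith
      exact mul_nonneg (mul_nonneg hcJ0 hsum0) (le_of_lt hE)
    nlinarith
  have t2 : (1 - μ) ^ T * ((1 / lmin) * ‖J‖) ≤ (‖J‖ / lmin) * Real.exp (-γL * D) := by
    have hc : (0:ℝ) ≤ (1 / lmin) * ‖J‖ := by positivity
    calc (1 - μ) ^ T * ((1 / lmin) * ‖J‖)
        ≤ Real.exp (-γL * D) * ((1 / lmin) * ‖J‖) := mul_le_mul_of_nonneg_right n3 hc
      _ = (‖J‖ / lmin) * Real.exp (-γL * D) := by ring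
  refine le_trans (norm_sub_le _ _) ?_
  rw [norm_neg, norm_smul, Real.norm_eq_abs, abs_of_pos (inv_pos.2 hlmax0)]
  have u1 := mul_le_mul_of_nonneg_left hpiece1 (le_of_lt (inv_pos.2 hlmax0))
  linarith [u1, hpiece2, t1, t2]

end NeumannAux
end
end

section
/- Suppose A ∈ ℝ^{n_x×n_x} is (τ,e^{−ρ})-stable and Q ∈ ℝ^{n_x×n_x}. For an integer H ≥ 0, let Λ^(H+1) be the (H+1)×(H+1) block matrix with blocks Λ_{km} ∈ ℝ^{n_x×n_x} given by Λ_{km} = G·A^{k−m} for k ≥ m and Λ_{km} = (A^{m−k})ᵀ·G for k < m, where G := Σ_{t=0}^∞ (A^t)ᵀQA^t. For each integer t ≥ 1 define the block row A_t^(H+1) ∈ ℝ^{n_x×(H+1)n_x}: for 1 ≤ t ≤ H, A_t^(H+1) = [A^{t−1}, A^{t−2}, …, A, I, 0, …, 0] (first t blocks equal A^{t−1},…,A⁰ = I, remaining blocks zero); for t ≥ H+1, A_t^(H+1) = [A^{t−1}, A^{t−2}, …, A^{t−H−1}]. Then Λ^(H+1) = Σ_{t=1}^∞ (A_t^(H+1))ᵀ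 Q A_t^(H+1), the series converging since A is (τ,e^{−ρ})-stable. -/
open scoped Matrix.Norms.L2Operator
open Matrix

noncomputable section

/-- The block row `A_t^{(H+1)}` (1-indexed `t ≥ 1`). -/
def Arow {nx : ℕ} (H : ℕ) (A : Matrix (Fin nx) (Fin nx) ℝ) (t : ℕ) :
    Matrix (Fin nx) (Fin (H + 1) × Fin nx) ℝ :=
  Matrix.of fun a p =>
    (if (p.1 : ℕ) + 1 ≤ t then A ^ (t - 1 - (p.1 : ℕ)) else 0) a p.2

/-- The block matrix `Λ^{(H+1)}` with blocks `Λ_{km} = G A^{k-m}` (`k ≥ m`) and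
`Λ_{km} = (A^{m-k})ᵀ G` (`k < m`). -/
def LamH {nx : ℕ} (H : ℕ) (A Q : Matrix (Fin nx) (Fin nx) ℝ) :
    Matrix (Fin (H + 1) × Fin nx) (Fin (H + 1) × Fin nx) ℝ :=
  Matrix.of fun p q =>
    (if (q.1 : ℕ) ≤ (p.1 : ℕ) then Gmat A Q * A ^ ((p.1 : ℕ) - (q.1 : ℕ))
     else (A ^ ((q.1 : ℕ) - (p.1 : ℕ)))ᵀ * Gmat A Q) p.2 q.2


noncomputable section StableAux16

open Matrix

variable {nx : ℕ}

/-- Block-selection matrix: `Eb nx H k` picks out the `k`-th `nx`-block. -/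
def Eb (nx H : ℕ) (k : Fin (H + 1)) : Matrix (Fin nx) (Fin (H + 1) × Fin nx) ℝ :=
  Matrix.of fun a p => if p.1 = k then (1 : Matrix (Fin nx) (Fin nx) ℝ) a p.2 else 0

lemma sandwich_apply (H : ℕ) (k m : Fin (H + 1)) (Λ : Matrix (Fin nx) (Fin nx) ℝ)
    (p q : Fin (H + 1)) (a b : Fin nx) :
    ((Eb nx H k)ᵀ * Λ * Eb nx H m) (p, a) (q, b)
      = if p = k ∧ q = m then Λ a b else 0 := by
  by_cases hp : p = k <;> by_cases hq : q = m <;>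
    simp [Eb, Matrix.mul_apply, Matrix.one_apply, hp, hq, ite_and, mul_ite, ite_mul,
      Finset.sum_ite_eq, Finset.sum_ite_eq']

lemma eq_double_sum (H : ℕ) (W : Fin (H + 1) → Fin (H + 1) → Matrix (Fin nx) (Fin nx) ℝ) :
    (Matrix.of fun p q => W p.1 q.1 p.2 q.2 :
        Matrix (Fin (H + 1) × Fin nx) (Fin (H + 1) × Fin nx) ℝ)
      = ∑ k, ∑ m, (Eb nx H k)ᵀ * W k m * Eb nx H m := by
  ext ⟨p, a⟩ ⟨q, b⟩
  simp [Matrix.sum_apply, sandwich_apply, ite_and, Finset.sum_ite_eq, Finset.sum_ite_eq']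

lemma Arow_eq (H t : ℕ) (A : Matrix (Fin nx) (Fin nx) ℝ) :
    Arow H A (t + 1)
      = ∑ k : Fin (H + 1), (if (k : ℕ) ≤ t then A ^ (t - (k : ℕ)) else 0) * Eb nx H k := by
  ext a ⟨q, b⟩
  have hq : (q : ℕ) + 1 ≤ t + 1 ↔ (q : ℕ) ≤ t := by omega
  simp [Arow, Eb, Matrix.sum_apply, Matrix.mul_apply, Matrix.one_apply, mul_ite, ite_mul,
    Finset.sum_ite_eq, Finset.sum_ite_eq', apply_ite (fun M : Matrix (Fin nx) (Fin nx) ℝ => M a b),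
    hq, Nat.add_sub_cancel]

lemma f_eq (H t : ℕ) (A Q : Matrix (Fin nx) (Fin nx) ℝ) :
    (Arow H A (t + 1))ᵀ * Q * Arow H A (t + 1)
      = ∑ k : Fin (H + 1), ∑ m : Fin (H + 1), (Eb nx H k)ᵀ *
          (if (k : ℕ) ≤ t ∧ (m : ℕ) ≤ t then
            (A ^ (t - (k : ℕ)))ᵀ * Q * A ^ (t - (m : ℕ)) else 0) * Eb nx H m := by
  rw [Arow_eq]
  simp only [Matrix.transpose_sum, Matrix.sum_mul, Matrix.mul_sum]
  rw [Finset.sum_comm]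
  refine Finset.sum_congr rfl fun k _ => ?_
  refine Finset.sum_congr rfl fun m _ => ?_
  by_cases hk : (k : ℕ) ≤ t <;> by_cases hm : (m : ℕ) ≤ t <;>
    simp [hk, hm, Matrix.transpose_mul, Matrix.mul_assoc]

/-- Right multiplication as a continuous linear map. -/
def mulRightCLM (C : Matrix (Fin nx) (Fin nx) ℝ) :
    Matrix (Fin nx) (Fin nx) ℝ →L[ℝ] Matrix (Fin nx) (Fin nx) ℝ :=
  LinearMap.toContinuousLinearMap
    { toFun := fun X => X * C
      map_add' := fun X Y => add_mul X Y C
      map_smul' := fun c X => smul_mul_assoc c X C }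

/-- Left multiplication as a continuous linear map. -/
def mulLeftCLM (C : Matrix (Fin nx) (Fin nx) ℝ) :
    Matrix (Fin nx) (Fin nx) ℝ →L[ℝ] Matrix (Fin nx) (Fin nx) ℝ :=
  LinearMap.toContinuousLinearMap
    { toFun := fun X => C * X
      map_add' := fun X Y => mul_add C X Y
      map_smul' := fun c X => mul_smul_comm c C X }

/-- `X ↦ (Eb k)ᵀ * X * Eb m` as a continuous linear map. -/
def sandCLM (H : ℕ) (k m : Fin (H + 1)) :
    Matrix (Fin nx) (Fin nx) ℝ →L[ℝ]
      Matrix (Fin (H + 1) × Fin nx) (Fin (H + 1) × Fin nx) ℝ :=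
  LinearMap.toContinuousLinearMap
    { toFun := fun X => (Eb nx H k)ᵀ * X * Eb nx H m
      map_add' := fun X Y => by rw [Matrix.mul_add, Matrix.add_mul]
      map_smul' := fun c X => by
        simp [Matrix.mul_smul, Matrix.smul_mul] }

lemma summable_g {A Q : Matrix (Fin nx) (Fin nx) ℝ} {τ ρ : ℝ} (hτ : 1 ≤ τ) (hρ : 0 < ρ)
    (hAst : IsExpStable τ ρ A) :
    Summable fun s : ℕ => (A ^ s)ᵀ * Q * A ^ s := by
  have hr0 : (0 : ℝ) ≤ Real.exp (-(2 * ρ)) := (Real.exp_pos _).le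
  have hr1 : Real.exp (-(2 * ρ)) < 1 := Real.exp_lt_one_iff.mpr (by linarith)
  refine Summable.of_norm_bounded (g := fun s => τ ^ 2 * ‖Q‖ * Real.exp (-(2 * ρ)) ^ s)
    (((summable_geometric_of_lt_one hr0 hr1).mul_left _)) (fun s => ?_)
  have hA : ‖A ^ s‖ ≤ τ * Real.exp (-ρ * s) := hAst s
  have h0 : (0 : ℝ) ≤ ‖A ^ s‖ := norm_nonneg _
  have hT : ‖(A ^ s)ᵀ‖ = ‖A ^ s‖ := by
    have : (A ^ s)ᵀ = (A ^ s)ᴴ := by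
      ext i j; simp [Matrix.conjTranspose_apply]
    rw [this, Matrix.l2_opNorm_conjTranspose]
  calc ‖(A ^ s)ᵀ * Q * A ^ s‖ ≤ ‖(A ^ s)ᵀ * Q‖ * ‖A ^ s‖ := Matrix.l2_opNorm_mul _ _
    _ ≤ ‖(A ^ s)ᵀ‖ * ‖Q‖ * ‖A ^ s‖ :=
        mul_le_mul_of_nonneg_right (Matrix.l2_opNorm_mul _ _) h0
    _ = ‖Q‖ * (‖A ^ s‖ * ‖A ^ s‖) := by rw [hT]; ring
    _ ≤ ‖Q‖ * ((τ * Real.exp (-ρ * s)) * (τ * Real.exp (-ρ * s))) := by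
        refine mul_le_mul_of_nonneg_left (mul_le_mul hA hA h0 ?_) (norm_nonneg _)
        positivity
    _ = τ ^ 2 * ‖Q‖ * Real.exp (-(2 * ρ)) ^ s := by
        have he : Real.exp (-ρ * s) * Real.exp (-ρ * s) = Real.exp (-(2 * ρ)) ^ s := by
          rw [← Real.exp_add, ← Real.exp_nat_mul]
          congr 1; ring
        rw [← he]; ring

lemma block_hasSum (A Q : Matrix (Fin nx) (Fin nx) ℝ)
    (hg : Summable fun s : ℕ => (A ^ s)ᵀ * Q * A ^ s) (k m : ℕ) :
    HasSum (fun t : ℕ => if k ≤ t ∧ m ≤ t then (A ^ (t - k))ᵀ * Q * A ^ (t - m) else 0)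
      (if m ≤ k then Gmat A Q * A ^ (k - m) else (A ^ (m - k))ᵀ * Gmat A Q) := by
  have hG : HasSum (fun s : ℕ => (A ^ s)ᵀ * Q * A ^ s) (Gmat A Q) := hg.hasSum
  by_cases hmk : m ≤ k
  · rw [if_pos hmk]
    have h1 : HasSum (fun s : ℕ => ((A ^ s)ᵀ * Q * A ^ s) * A ^ (k - m))
        (Gmat A Q * A ^ (k - m)) := hG.mapL (mulRightCLM _)
    have hinj : Function.Injective (fun s : ℕ => s + k) := fun a b h => by simpa using h
    refine (hinj.hasSum_iff fun t ht => ?_).mp ?_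
    · rw [if_neg]
      rintro ⟨hkt, -⟩
      exact ht ⟨t - k, by simp; omega⟩
    · convert h1 using 1
      funext s
      have c1 : k ≤ s + k := by omega
      have c2 : m ≤ s + k := by omega
      rw [Function.comp_apply, if_pos ⟨c1, c2⟩]
      have e1 : s + k - k = s := by omega
      have e2 : s + k - m = s + (k - m) := by omega
      rw [e1, e2, pow_add]
      simp only [Matrix.mul_assoc]
  · rw [if_neg hmk]
    have h1 : HasSum (fun s : ℕ => (A ^ (m - k))ᵀ * ((A ^ s)ᵀ * Q * A ^ s))
        ((A ^ (m - k))ᵀ * Gmat A Q) := hG.mapL (mulLeftCLM _)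
    have hinj : Function.Injective (fun s : ℕ => s + m) := fun a b h => by simpa using h
    refine (hinj.hasSum_iff fun t ht => ?_).mp ?_
    · rw [if_neg]
      rintro ⟨-, hmt⟩
      exact ht ⟨t - m, by simp; omega⟩
    · convert h1 using 1
      funext s
      have c1 : k ≤ s + m := by omega
      have c2 : m ≤ s + m := by omega
      rw [Function.comp_apply, if_pos ⟨c1, c2⟩]
      have e1 : s + m - m = s := by omega
      have e2 : s + m - k = s + (m - k) := by omega
      rw [e1, e2, pow_add, Matrix.transpose_mul]
      simp only [Matrix.mul_assoc]

end StableAux16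

/-- Lemma: `Λ^{(H+1)} = ∑_{t≥1} (A_t^{(H+1)})ᵀ Q A_t^{(H+1)}`. -/
theorem LamH_eq_tsum
    {nx : ℕ} (A Q : Matrix (Fin nx) (Fin nx) ℝ)
    (τ ρ : ℝ) (hτ : 1 ≤ τ) (hρ : 0 < ρ)
    (hAst : IsExpStable τ ρ A) (H : ℕ) :
    LamH H A Q = ∑' t : ℕ, (Arow H A (t + 1))ᵀ * Q * Arow H A (t + 1) := by
  classical
  have hg := summable_g (Q := Q) hτ hρ hAst
  have hL : LamH H A Q
      = ∑ k : Fin (H + 1), ∑ m : Fin (H + 1), (Eb nx H k)ᵀ *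
          (if (m : ℕ) ≤ (k : ℕ) then Gmat A Q * A ^ ((k : ℕ) - (m : ℕ))
           else (A ^ ((m : ℕ) - (k : ℕ)))ᵀ * Gmat A Q) * Eb nx H m :=
    eq_double_sum H (fun k m =>
      if (m : ℕ) ≤ (k : ℕ) then Gmat A Q * A ^ ((k : ℕ) - (m : ℕ))
      else (A ^ ((m : ℕ) - (k : ℕ)))ᵀ * Gmat A Q)
  have total : HasSum (fun t : ℕ => (Arow H A (t + 1))ᵀ * Q * Arow H A (t + 1))
      (LamH H A Q) := by
    rw [hL, funext fun t => f_eq H t A Q]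
    refine hasSum_sum fun k _ => hasSum_sum fun m _ => ?_
    exact (block_hasSum A Q hg k m).mapL (sandCLM H k m)
  exact total.tsum_eq.symm
end
end

section
/- Let H ≥ 1 and let M be an H×H block matrix with blocks M_{km} ∈ ℝ^{n_u×n_u} and J an H×1 block matrix with blocks J_k ∈ ℝ^{n_u×n_x}, such that every M_{km} is (c_M,γ_M)-SED with c_M ≥ 1 and every J_k is (c_J,γ_M)-SED with c_J > 0; let λ_max ≥ 1 be a real number. Define L^1 := −J/λ_max and recursively L^{t+1} := (I − M/λ_max)·L^t − J/λ_max for t ≥ 1. Then for every integer t ≥ 1 and every 1 ≤ k ≤ H, the block L^t_k ∈ ℝ^{n_u×n_x} is ((2(c_M·N·H + 1)^{t−1} − 1)·c_J, γ_M)-SED. -/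
open scoped Matrix.Norms.L2Operator
open Matrix

noncomputable section

lemma blk_mul_decomp {N H : ℕ} {nxd nud : Fin N → ℕ}
    (M : Matrix (Fin H × BIdx nud) (Fin H × BIdx nud) ℝ)
    (X : Matrix (Fin H × BIdx nud) (BIdx nxd) ℝ) (k : Fin H) (i j : Fin N) :
    blk (Matrix.of fun a b => (M * X) (k, a) b) i j
      = ∑ m : Fin H, ∑ l : Fin N,
          blk (Matrix.of fun a b => M (k, a) (m, b)) i l
            * blk (Matrix.of fun a b => X (m, a) b) l j := by
  ext a b
  simp [blk, Matrix.mul_apply, Matrix.sum_apply, Fintype.sum_prod_type,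
    Finset.sum_sigma, ← Finset.univ_sigma_univ]

/-- Lemma: the truncated Neumann iterates preserve the SED property,
with SED constant growing at rate `(c_M N H + 1)^{t-1}`. -/
theorem neumann_iterates_SED
    {N : ℕ} (hN : 1 ≤ N) {nxd nud : Fin N → ℕ}
    (hnx : ∀ i, 1 ≤ nxd i) (hnu : ∀ i, 1 ≤ nud i)
    (dist : Fin N → Fin N → ℝ) (hdist : IsDist dist)
    (H : ℕ) (hH : 1 ≤ H)
    (M : Matrix (Fin H × BIdx nud) (Fin H × BIdx nud) ℝ)
    (J : Matrix (Fin H × BIdx nud) (BIdx nxd) ℝ)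
    (cM cJ γM : ℝ) (hcM : 1 ≤ cM) (hcJ : 0 < cJ) (hγM : 0 < γM)
    (hMsed : ∀ k m : Fin H, IsSED dist cM γM (Matrix.of fun a b => M (k, a) (m, b)))
    (hJsed : ∀ k : Fin H, IsSED dist cJ γM (Matrix.of fun a b => J (k, a) b))
    (lmax : ℝ) (hlmax : 1 ≤ lmax)
    (L : ℕ → Matrix (Fin H × BIdx nud) (BIdx nxd) ℝ)
    (hL1 : L 1 = -((1 / lmax) • J))
    (hrec : ∀ t : ℕ, 1 ≤ t →
      L (t + 1) = ((1 : Matrix (Fin H × BIdx nud) (Fin H × BIdx nud) ℝ)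
          - (1 / lmax) • M) * L t - (1 / lmax) • J) :
    ∀ t : ℕ, 1 ≤ t → ∀ k : Fin H,
      IsSED dist ((2 * (cM * (N : ℝ) * (H : ℝ) + 1) ^ (t - 1) - 1) * cJ) γM
        (Matrix.of fun a b => L t (k, a) b) := by
  have hl0 : (0:ℝ) < lmax := lt_of_lt_of_le one_pos hlmax
  have hs0 : (0:ℝ) ≤ 1 / lmax := by positivity
  have hs1 : 1 / lmax ≤ 1 := by rw [div_le_one hl0]; exact hlmax
  set a : ℝ := cM * (N : ℝ) * (H : ℝ) + 1 with ha
  have hNH : (1:ℝ) ≤ cM * (N : ℝ) * (H : ℝ) := by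
    have h1 : (1:ℝ) ≤ (N:ℝ) := by exact_mod_cast hN
    have h2 : (1:ℝ) ≤ (H:ℝ) := by exact_mod_cast hH
    have h3 : (1:ℝ) * 1 ≤ cM * (N:ℝ) := mul_le_mul hcM h1 zero_le_one (zero_le_one.trans hcM)
    have h4 : (cM * (N:ℝ)) * 1 ≤ (cM * (N:ℝ)) * (H:ℝ) :=
      mul_le_mul_of_nonneg_left h2 (by linarith)
    nlinarith
  have ha2 : (2:ℝ) ≤ a := by linarith
  have hexp : ∀ i l j : Fin N,
      Real.exp (-γM * dist i l) * Real.exp (-γM * dist l j)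
        ≤ Real.exp (-γM * dist i j) := by
    intro i l j
    rw [← Real.exp_add]
    apply Real.exp_le_exp.mpr
    have := hdist.triangle i j l
    nlinarith
  intro t ht
  induction t, ht using Nat.le_induction with
  | base =>
    intro k i j
    have hblk : blk (Matrix.of fun a b => L 1 (k, a) b) i j
        = -((1 / lmax) • blk (Matrix.of fun a b => J (k, a) b) i j) := by
      ext x y; simp [blk, hL1]
    rw [hblk]
    have := hJsed k i j
    have hE : (0:ℝ) < Real.exp (-γM * dist i j) := Real.exp_pos _
    rw [norm_neg, norm_smul, Real.norm_eq_abs, abs_of_nonneg hs0]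
    simp only [Nat.sub_self, pow_zero]
    calc (1 / lmax) * ‖blk (Matrix.of fun a b => J (k, a) b) i j‖
        ≤ 1 * (cJ * Real.exp (-γM * dist i j)) := by
          apply mul_le_mul hs1 this (norm_nonneg _) zero_le_one
      _ = (2 * 1 - 1) * cJ * Real.exp (-γM * dist i j) := by ring
  | succ t ht ih =>
    intro k i j
    set ct : ℝ := (2 * a ^ (t - 1) - 1) * cJ with hct
    have hp1 : (1:ℝ) ≤ a ^ (t - 1) := one_le_pow₀ (by linarith : (1:ℝ) ≤ a)
    have hct0 : 0 < ct := by nlinarith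
    have hE : (0:ℝ) < Real.exp (-γM * dist i j) := Real.exp_pos _
    have hLs : L (t + 1) = L t - (1 / lmax) • (M * L t) - (1 / lmax) • J := by
      rw [hrec t ht, Matrix.sub_mul, Matrix.one_mul, Matrix.smul_mul]
    have key : blk (Matrix.of fun a b => L (t + 1) (k, a) b) i j
        = blk (Matrix.of fun a b => L t (k, a) b) i j
          - (1 / lmax) • blk (Matrix.of fun a b => (M * L t) (k, a) b) i j
          - (1 / lmax) • blk (Matrix.of fun a b => J (k, a) b) i j := by
      ext x y; simp [blk, hLs]
    have hML : ‖blk (Matrix.of fun a b => (M * L t) (k, a) b) i j‖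
        ≤ (H : ℝ) * ((N : ℝ) * (cM * (ct * Real.exp (-γM * dist i j)))) := by
      rw [blk_mul_decomp]
      refine (norm_sum_le _ _).trans ?_
      have hbound : ∀ m : Fin H,
          ‖∑ l : Fin N, blk (Matrix.of fun a b => M (k, a) (m, b)) i l
              * blk (Matrix.of fun a b => L t (m, a) b) l j‖
            ≤ (N : ℝ) * (cM * (ct * Real.exp (-γM * dist i j))) := by
        intro m
        refine (norm_sum_le _ _).trans ?_
        have hterm : ∀ l : Fin N,
            ‖blk (Matrix.of fun a b => M (k, a) (m, b)) i l
              * blk (Matrix.of fun a b => L t (m, a) b) l j‖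
            ≤ cM * (ct * Real.exp (-γM * dist i j)) := by
          intro l
          refine (Matrix.l2_opNorm_mul _ _).trans ?_
          have h1 := hMsed k m i l
          have h2 := ih m l j
          calc ‖blk (Matrix.of fun a b => M (k, a) (m, b)) i l‖
                * ‖blk (Matrix.of fun a b => L t (m, a) b) l j‖
              ≤ (cM * Real.exp (-γM * dist i l)) * (ct * Real.exp (-γM * dist l j)) := by
                apply mul_le_mul h1 h2 (norm_nonneg _) (by positivity)
            _ = cM * ct * (Real.exp (-γM * dist i l) * Real.exp (-γM * dist l j)) := by ring
            _ ≤ cM * ct * Real.exp (-γM * dist i j) := by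
                apply mul_le_mul_of_nonneg_left (hexp i l j) (by positivity)
            _ = cM * (ct * Real.exp (-γM * dist i j)) := by ring
        calc ∑ l : Fin N, ‖blk (Matrix.of fun a b => M (k, a) (m, b)) i l
              * blk (Matrix.of fun a b => L t (m, a) b) l j‖
            ≤ ∑ _l : Fin N, cM * (ct * Real.exp (-γM * dist i j)) :=
              Finset.sum_le_sum fun l _ => hterm l
          _ = (N : ℝ) * (cM * (ct * Real.exp (-γM * dist i j))) := by
              simp [Finset.sum_const, mul_comm]
      calc ∑ m : Fin H, ‖∑ l : Fin N, blk (Matrix.of fun a b => M (k, a) (m, b)) i l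
            * blk (Matrix.of fun a b => L t (m, a) b) l j‖
          ≤ ∑ _m : Fin H, (N : ℝ) * (cM * (ct * Real.exp (-γM * dist i j))) :=
            Finset.sum_le_sum fun m _ => hbound m
        _ = (H : ℝ) * ((N : ℝ) * (cM * (ct * Real.exp (-γM * dist i j)))) := by
            simp [Finset.sum_const, mul_comm]
    have hJb := hJsed k i j
    have hLtb := ih k i j
    have hpow : a ^ (t - 1) * a = a ^ t := by
      rw [← pow_succ, Nat.sub_add_cancel ht]
    have hcoef : ct + cM * (N : ℝ) * (H : ℝ) * ct + cJ ≤ (2 * a ^ t - 1) * cJ := by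
      have h2 : (0:ℝ) ≤ cJ * (a - 2) := mul_nonneg hcJ.le (by linarith)
      nlinarith [hp1, hcJ.le]
    rw [key, Nat.add_sub_cancel]
    calc ‖blk (Matrix.of fun a b => L t (k, a) b) i j
          - (1 / lmax) • blk (Matrix.of fun a b => (M * L t) (k, a) b) i j
          - (1 / lmax) • blk (Matrix.of fun a b => J (k, a) b) i j‖
        ≤ ‖blk (Matrix.of fun a b => L t (k, a) b) i j‖
          + (1 / lmax) * ‖blk (Matrix.of fun a b => (M * L t) (k, a) b) i j‖
          + (1 / lmax) * ‖blk (Matrix.of fun a b => J (k, a) b) i j‖ := by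
          refine (norm_sub_le _ _).trans ?_
          rw [norm_smul, Real.norm_eq_abs, abs_of_nonneg hs0]
          refine add_le_add ?_ le_rfl
          refine (norm_sub_le _ _).trans ?_
          rw [norm_smul, Real.norm_eq_abs, abs_of_nonneg hs0]
      _ ≤ ‖blk (Matrix.of fun a b => L t (k, a) b) i j‖
          + ‖blk (Matrix.of fun a b => (M * L t) (k, a) b) i j‖
          + ‖blk (Matrix.of fun a b => J (k, a) b) i j‖ := by
          have u1 := mul_le_of_le_one_left (norm_nonneg
            (blk (Matrix.of fun a b => (M * L t) (k, a) b) i j)) hs1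
          have u2 := mul_le_of_le_one_left (norm_nonneg
            (blk (Matrix.of fun a b => J (k, a) b) i j)) hs1
          linarith
      _ ≤ ct * Real.exp (-γM * dist i j)
          + (H : ℝ) * ((N : ℝ) * (cM * (ct * Real.exp (-γM * dist i j))))
          + cJ * Real.exp (-γM * dist i j) := by linarith
      _ = (ct + cM * (N : ℝ) * (H : ℝ) * ct + cJ) * Real.exp (-γM * dist i j) := by ring
      _ ≤ (2 * a ^ t - 1) * cJ * Real.exp (-γM * dist i j) :=
          mul_le_mul_of_nonneg_right hcoef hE.le
end
end
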